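/- arXiv:2403.01820 — 3 statements merged into one kernel-verified Lean document; each statement's English description precedes it below -/
import Mathlib

section
/- Suppose f is continuously differentiable, satisfies the scaled 1D LRTE on τ × D × [-1,1], and satisfies the periodic boundary condition f(t, x_L, μ) = f(t, x_R, μ) for all t ∈ τ and μ ∈ [-1,1]. Then the mass conservation law holds: for every t ∈ τ, (d/dt) ∫_{x_L}^{x_R} ρ(t,x) dx + ∫_{x_L}^{x_R} α(x) ρ(t,x) dx − ∫_{x_L}^{x_R} G(x) dx = 0. -/
open MeasureTheory Real intervalIntegral

/-- The partial derivative `∂_t f` of `f = f(t,x,μ)` in the time variable. -/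
noncomputable def pt (f : ℝ → ℝ → ℝ → ℝ) (t x μ : ℝ) : ℝ := deriv (fun s => f s x μ) t

/-- The partial derivative `∂_x f` of `f = f(t,x,μ)` in the space variable. -/
noncomputable def px (f : ℝ → ℝ → ℝ → ℝ) (t x μ : ℝ) : ℝ := deriv (fun y => f t y μ) x

/-- The angular average `⟨f⟩(t,x) = (1/2) ∫_{-1}^{1} f(t,x,μ) dμ`. -/
noncomputable def avg (f : ℝ → ℝ → ℝ → ℝ) (t x : ℝ) : ℝ :=
  (1 / 2) * ∫ μ in (-1 : ℝ)..1, f t x μ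

/-- `f` satisfies the scaled 1D linear radiative transfer equation
`ε² ∂_t f + ε μ ∂_x f = σ(x)(⟨f⟩ − f) − ε² α(x) f + ε² G(x)`
on `(0,T) × (x_L,x_R) × [-1,1]`. -/
def SolvesLRTE (ε T xL xR : ℝ) (σ α G : ℝ → ℝ) (f : ℝ → ℝ → ℝ → ℝ) : Prop :=
  ∀ t ∈ Set.Ioo (0 : ℝ) T, ∀ x ∈ Set.Ioo xL xR, ∀ μ ∈ Set.Icc (-1 : ℝ) 1,
    ε ^ 2 * pt f t x μ + ε * μ * px f t x μ =
      σ x * (avg f t x - f t x μ) - ε ^ 2 * α x * f t x μ + ε ^ 2 * G x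

lemma hasDerivAt_time (f : ℝ → ℝ → ℝ → ℝ)
    (hf : ContDiff ℝ 1 (fun p : ℝ × ℝ × ℝ => f p.1 p.2.1 p.2.2)) (t x μ : ℝ) :
    HasDerivAt (fun s => f s x μ)
      (fderiv ℝ (fun p : ℝ × ℝ × ℝ => f p.1 p.2.1 p.2.2) (t, x, μ) (1, 0, 0)) t := by
  have hd := (hf.differentiable one_ne_zero (t, x, μ)).hasFDerivAt
  have hline : HasDerivAt (fun s : ℝ => (s, x, μ)) ((1 : ℝ), (0 : ℝ), (0 : ℝ)) t :=
    (hasDerivAt_id t).prodMk ((hasDerivAt_const t x).prodMk (hasDerivAt_const t μ))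
  exact hd.comp_hasDerivAt t hline

lemma hasDerivAt_space (f : ℝ → ℝ → ℝ → ℝ)
    (hf : ContDiff ℝ 1 (fun p : ℝ × ℝ × ℝ => f p.1 p.2.1 p.2.2)) (t x μ : ℝ) :
    HasDerivAt (fun y => f t y μ)
      (fderiv ℝ (fun p : ℝ × ℝ × ℝ => f p.1 p.2.1 p.2.2) (t, x, μ) (0, 1, 0)) x := by
  have hd := (hf.differentiable one_ne_zero (t, x, μ)).hasFDerivAt
  have hline : HasDerivAt (fun y : ℝ => (t, y, μ)) ((0 : ℝ), (1 : ℝ), (0 : ℝ)) x :=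
    (hasDerivAt_const x t).prodMk ((hasDerivAt_id x).prodMk (hasDerivAt_const x μ))
  exact hd.comp_hasDerivAt x hline

lemma pt_eq (f : ℝ → ℝ → ℝ → ℝ)
    (hf : ContDiff ℝ 1 (fun p : ℝ × ℝ × ℝ => f p.1 p.2.1 p.2.2)) (t x μ : ℝ) :
    pt f t x μ = fderiv ℝ (fun p : ℝ × ℝ × ℝ => f p.1 p.2.1 p.2.2) (t, x, μ) (1, 0, 0) :=
  (hasDerivAt_time f hf t x μ).deriv

lemma px_eq (f : ℝ → ℝ → ℝ → ℝ)
    (hf : ContDiff ℝ 1 (fun p : ℝ × ℝ × ℝ => f p.1 p.2.1 p.2.2)) (t x μ : ℝ) :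
    px f t x μ = fderiv ℝ (fun p : ℝ × ℝ × ℝ => f p.1 p.2.1 p.2.2) (t, x, μ) (0, 1, 0) :=
  (hasDerivAt_space f hf t x μ).deriv

lemma pt_hasDerivAt (f : ℝ → ℝ → ℝ → ℝ)
    (hf : ContDiff ℝ 1 (fun p : ℝ × ℝ × ℝ => f p.1 p.2.1 p.2.2)) (t x μ : ℝ) :
    HasDerivAt (fun s => f s x μ) (pt f t x μ) t := by
  rw [pt_eq f hf]; exact hasDerivAt_time f hf t x μ

lemma px_hasDerivAt (f : ℝ → ℝ → ℝ → ℝ)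
    (hf : ContDiff ℝ 1 (fun p : ℝ × ℝ × ℝ => f p.1 p.2.1 p.2.2)) (t x μ : ℝ) :
    HasDerivAt (fun y => f t y μ) (px f t x μ) x := by
  rw [px_eq f hf]; exact hasDerivAt_space f hf t x μ

lemma pt_continuous (f : ℝ → ℝ → ℝ → ℝ)
    (hf : ContDiff ℝ 1 (fun p : ℝ × ℝ × ℝ => f p.1 p.2.1 p.2.2)) :
    Continuous (fun p : ℝ × ℝ × ℝ => pt f p.1 p.2.1 p.2.2) := by
  have h := (hf.continuous_fderiv one_ne_zero).clm_apply
    (continuous_const (y := ((1 : ℝ), (0 : ℝ), (0 : ℝ))))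
  exact h.congr fun p => (pt_eq f hf p.1 p.2.1 p.2.2).symm

lemma px_continuous (f : ℝ → ℝ → ℝ → ℝ)
    (hf : ContDiff ℝ 1 (fun p : ℝ × ℝ × ℝ => f p.1 p.2.1 p.2.2)) :
    Continuous (fun p : ℝ × ℝ × ℝ => px f p.1 p.2.1 p.2.2) := by
  have h := (hf.continuous_fderiv one_ne_zero).clm_apply
    (continuous_const (y := ((0 : ℝ), (1 : ℝ), (0 : ℝ))))
  exact h.congr fun p => (px_eq f hf p.1 p.2.1 p.2.2).symm

/-- If `f` is continuously differentiable, satisfies the scaled 1D LRTE on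
`τ × D × [-1,1]` and satisfies the periodic boundary condition
`f(t,x_L,μ) = f(t,x_R,μ)`, then the mass conservation law holds: for every `t ∈ τ`,
`(d/dt) ∫_{x_L}^{x_R} ρ dx + ∫_{x_L}^{x_R} α ρ dx − ∫_{x_L}^{x_R} G dx = 0`. -/
theorem mass_conservation_periodic
    (ε T xL xR : ℝ) (σ α G : ℝ → ℝ) (f : ℝ → ℝ → ℝ → ℝ)
    (hε : 0 < ε) (hT : 0 < T) (hD : xL < xR)
    (hσ : ContDiff ℝ 2 σ) (hσpos : ∀ x, 0 < σ x)
    (hα : ContDiff ℝ 1 α) (hG : ContDiff ℝ 1 G)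
    (hf : ContDiff ℝ 1 (fun p : ℝ × ℝ × ℝ => f p.1 p.2.1 p.2.2))
    (hsol : SolvesLRTE ε T xL xR σ α G f)
    (hper : ∀ t ∈ Set.Ioo (0 : ℝ) T, ∀ μ ∈ Set.Icc (-1 : ℝ) 1, f t xL μ = f t xR μ) :
    ∀ t ∈ Set.Ioo (0 : ℝ) T,
      deriv (fun s => ∫ x in xL..xR, avg f s x) t
        + (∫ x in xL..xR, α x * avg f t x) - (∫ x in xL..xR, G x) = 0 := by
  intro t ht
  have h2 : (-1 : ℝ) ≤ 1 := by norm_num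
  have hfc : Continuous (fun p : ℝ × ℝ × ℝ => f p.1 p.2.1 p.2.2) := hf.continuous
  have hptc := pt_continuous f hf
  have hpxc := px_continuous f hf
  -- measures
  set ν1 : Measure ℝ := volume.restrict (Set.Ioc xL xR) with hν1
  set ν2 : Measure ℝ := volume.restrict (Set.Ioc (-1 : ℝ) 1) with hν2
  haveI hfin1 : IsFiniteMeasure ν1 := by
    constructor
    rw [hν1, Measure.restrict_apply_univ, Real.volume_Ioc]
    exact ENNReal.ofReal_lt_top
  haveI hfin2 : IsFiniteMeasure ν2 := by
    constructor
    rw [hν2, Measure.restrict_apply_univ, Real.volume_Ioc]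
    exact ENNReal.ofReal_lt_top
  have hprodeq : ν1.prod ν2
      = (volume : Measure (ℝ × ℝ)).restrict (Set.Ioc xL xR ×ˢ Set.Ioc (-1 : ℝ) 1) := by
    rw [hν1, hν2, Measure.prod_restrict, Measure.volume_eq_prod]
  have hrect : ∀ g : ℝ × ℝ → ℝ, Continuous g → Integrable g (ν1.prod ν2) := by
    intro g hg
    rw [hprodeq]
    have hK : IsCompact (Set.Icc xL xR ×ˢ Set.Icc (-1 : ℝ) 1) := isCompact_Icc.prod isCompact_Icc
    exact (hg.continuousOn.integrableOn_compact hK).mono_set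
      (Set.prod_mono Set.Ioc_subset_Icc_self Set.Ioc_subset_Icc_self)
  -- continuity of slices
  have hfs : ∀ s : ℝ, Continuous (fun p : ℝ × ℝ => f s p.1 p.2) := fun s =>
    hfc.comp (continuous_const.prodMk continuous_id)
  have hpts : Continuous (fun p : ℝ × ℝ => pt f t p.1 p.2) :=
    hptc.comp (continuous_const.prodMk continuous_id)
  -- bound for ∂_t f on a compact neighborhood
  obtain ⟨M, hM⟩ := ((isCompact_Icc (a := t - 1) (b := t + 1)).prod
      ((isCompact_Icc (a := xL) (b := xR)).prod
        (isCompact_Icc (a := (-1 : ℝ)) (b := 1)))).exists_bound_of_continuousOn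
      hptc.continuousOn
  have hmemS : ∀ᵐ p ∂(ν1.prod ν2), p ∈ Set.Ioc xL xR ×ˢ Set.Ioc (-1 : ℝ) 1 := by
    rw [hprodeq]
    exact ae_restrict_mem (measurableSet_Ioc.prod measurableSet_Ioc)
  -- derivative under the integral sign
  have hdom := hasDerivAt_integral_of_dominated_loc_of_deriv_le
    (F := fun s (p : ℝ × ℝ) => f s p.1 p.2) (F' := fun s (p : ℝ × ℝ) => pt f s p.1 p.2)
    (x₀ := t) (bound := fun _ => M) (μ := ν1.prod ν2) (Metric.ball_mem_nhds t one_pos)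
    (Filter.Eventually.of_forall fun s => (hfs s).aestronglyMeasurable)
    (hrect _ (hfs t)) hpts.aestronglyMeasurable
    (by
      filter_upwards [hmemS] with p hp
      intro s hs
      have hs' : s ∈ Set.Icc (t - 1) (t + 1) := by
        rw [Real.ball_eq_Ioo] at hs
        exact Set.Ioo_subset_Icc_self hs
      exact hM (s, p.1, p.2) ⟨hs', ⟨Set.Ioc_subset_Icc_self hp.1, Set.Ioc_subset_Icc_self hp.2⟩⟩)
    (integrable_const M)
    (Filter.Eventually.of_forall fun p s _ => pt_hasDerivAt f hf s p.1 p.2)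
  obtain ⟨hint', hderiv⟩ := hdom
  -- representation of the inner function
  have hrepr : ∀ s : ℝ, (∫ x in xL..xR, avg f s x)
      = (1 / 2) * ∫ p, f s p.1 p.2 ∂(ν1.prod ν2) := by
    intro s
    calc (∫ x in xL..xR, avg f s x)
        = ∫ x, (1 / 2) * (∫ μ, f s x μ ∂ν2) ∂ν1 := by
          rw [intervalIntegral.integral_of_le hD.le]
          simp only [avg, intervalIntegral.integral_of_le h2]
          rfl
      _ = (1 / 2) * ∫ x, (∫ μ, f s x μ ∂ν2) ∂ν1 := integral_const_mul _ _
      _ = (1 / 2) * ∫ p, f s p.1 p.2 ∂(ν1.prod ν2) := by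
          rw [integral_prod _ (hrect _ (hfs s))]
  have hd2 : HasDerivAt (fun s => ∫ x in xL..xR, avg f s x)
      ((1 / 2) * ∫ p, pt f t p.1 p.2 ∂(ν1.prod ν2)) t := by
    have heq : (fun s => ∫ x in xL..xR, avg f s x)
        = fun s => (1 / 2) * ∫ p, f s p.1 p.2 ∂(ν1.prod ν2) := funext hrepr
    rw [heq]
    exact hderiv.const_mul _
  -- the inner (angular) identity
  have havgc : Continuous (fun x => avg f t x) := by
    simp only [avg]
    exact continuous_const.mul
      (intervalIntegral.continuous_parametric_intervalIntegral_of_continuous'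
        (f := fun x μ => f t x μ) (hfs t) _ _)
  have hIpxc : Continuous (fun x => ∫ μ in (-1 : ℝ)..1, μ * px f t x μ) :=
    intervalIntegral.continuous_parametric_intervalIntegral_of_continuous'
      (f := fun x μ => μ * px f t x μ)
      (continuous_snd.mul (hpxc.comp (continuous_const.prodMk continuous_id))) _ _
  have hinner : ∀ x ∈ Set.Ioo xL xR,
      (∫ μ in (-1 : ℝ)..1, pt f t x μ)
        = -(1 / ε) * (∫ μ in (-1 : ℝ)..1, μ * px f t x μ) - 2 * (α x * avg f t x) + 2 * G x := by
    intro x hx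
    have hfx : Continuous fun μ => f t x μ :=
      hfc.comp (continuous_const.prodMk (continuous_const.prodMk continuous_id))
    have hpxx : Continuous fun μ => px f t x μ :=
      hpxc.comp (continuous_const.prodMk (continuous_const.prodMk continuous_id))
    have hIf : (∫ μ in (-1 : ℝ)..1, f t x μ) = 2 * avg f t x := by
      simp only [avg]; ring
    have hε2 : ε ^ 2 ≠ 0 := pow_ne_zero 2 hε.ne'
    have key : ∀ μ ∈ Set.uIcc (-1 : ℝ) 1, pt f t x μ =
        (σ x * avg f t x / ε ^ 2 + G x)
          + ((-(σ x) / ε ^ 2 - α x) * f t x μ + (-(1 / ε)) * (μ * px f t x μ)) := by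
      intro μ hμ
      have h := hsol t ht x hx μ (by rwa [Set.uIcc_of_le h2] at hμ)
      have h' : pt f t x μ = (σ x * (avg f t x - f t x μ) - ε ^ 2 * α x * f t x μ
          + ε ^ 2 * G x - ε * μ * px f t x μ) / ε ^ 2 := by
        rw [eq_div_iff hε2]; linarith
      rw [h']
      field_simp
      ring
    have hμpx : Continuous fun μ : ℝ => μ * px f t x μ := continuous_id'.mul hpxx
    rw [intervalIntegral.integral_congr key]
    rw [intervalIntegral.integral_add intervalIntegrable_const
      (((hfx.intervalIntegrable _ _).const_mul _).add
        ((hμpx.intervalIntegrable _ _).const_mul _))]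
    rw [intervalIntegral.integral_add ((hfx.intervalIntegrable _ _).const_mul _)
      ((hμpx.intervalIntegrable _ _).const_mul _)]
    rw [intervalIntegral.integral_const_mul, intervalIntegral.integral_const_mul,
      intervalIntegral.integral_const, hIf]
    simp only [smul_eq_mul]
    field_simp
    ring
  -- the flux term vanishes by periodicity
  have hswap0 : (∫ x in xL..xR, ∫ μ in (-1 : ℝ)..1, μ * px f t x μ) = 0 := by
    have hcont : Continuous (fun p : ℝ × ℝ => p.2 * px f t p.1 p.2) :=
      continuous_snd.mul (hpxc.comp (continuous_const.prodMk continuous_id))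
    calc (∫ x in xL..xR, ∫ μ in (-1 : ℝ)..1, μ * px f t x μ)
        = ∫ x, (∫ μ, μ * px f t x μ ∂ν2) ∂ν1 := by
          rw [intervalIntegral.integral_of_le hD.le]
          simp only [intervalIntegral.integral_of_le h2]
          rfl
      _ = ∫ μ, (∫ x, μ * px f t x μ ∂ν1) ∂ν2 :=
          integral_integral_swap (hrect _ hcont)
      _ = 0 := by
          have hz : ∀ μ ∈ Set.Ioc (-1 : ℝ) 1, (∫ x, μ * px f t x μ ∂ν1) = 0 := by
            intro μ hμ
            have hpxm : Continuous fun y => px f t y μ :=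
              hpxc.comp (continuous_const.prodMk (continuous_id.prodMk continuous_const))
            have hftc : (∫ x in xL..xR, px f t x μ) = f t xR μ - f t xL μ :=
              intervalIntegral.integral_eq_sub_of_hasDerivAt
                (fun y _ => px_hasDerivAt f hf t y μ) (hpxm.intervalIntegrable _ _)
            have : (∫ x, μ * px f t x μ ∂ν1) = μ * ∫ x, px f t x μ ∂ν1 :=
              integral_const_mul _ _
            rw [this, hν1, ← intervalIntegral.integral_of_le hD.le, hftc,
              hper t ht μ (Set.Ioc_subset_Icc_self hμ)]
            ring
          rw [hν2]
          rw [setIntegral_congr_fun measurableSet_Ioc hz]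
          simp
  -- compute the product integral of ∂_t f
  have hae : ∀ᵐ x ∂ν1, (∫ μ, pt f t x μ ∂ν2)
      = -(1 / ε) * (∫ μ in (-1 : ℝ)..1, μ * px f t x μ) - 2 * (α x * avg f t x) + 2 * G x := by
    have hne : ∀ᵐ x ∂ν1, x ≠ xR := by
      refine ae_iff.2 ?_
      have hset : {x : ℝ | ¬x ≠ xR} = {xR} := by ext y; simp
      rw [hset, hν1, Measure.restrict_apply (measurableSet_singleton xR)]
      exact measure_mono_null Set.inter_subset_left (measure_singleton xR)
    have hmem : ∀ᵐ x ∂ν1, x ∈ Set.Ioc xL xR := by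
      rw [hν1]; exact ae_restrict_mem measurableSet_Ioc
    filter_upwards [hne, hmem] with x hxne hxm
    have hxo : x ∈ Set.Ioo xL xR := ⟨hxm.1, lt_of_le_of_ne hxm.2 hxne⟩
    rw [hν2, ← intervalIntegral.integral_of_le h2]
    exact hinner x hxo
  have hQ : (∫ p, pt f t p.1 p.2 ∂(ν1.prod ν2))
      = -2 * (∫ x in xL..xR, α x * avg f t x) + 2 * ∫ x in xL..xR, G x := by
    calc (∫ p, pt f t p.1 p.2 ∂(ν1.prod ν2))
        = ∫ x, (∫ μ, pt f t x μ ∂ν2) ∂ν1 := integral_prod _ hint'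
      _ = ∫ x, (-(1 / ε) * (∫ μ in (-1 : ℝ)..1, μ * px f t x μ)
            - 2 * (α x * avg f t x) + 2 * G x) ∂ν1 := integral_congr_ae hae
      _ = ∫ x in xL..xR, (-(1 / ε) * (∫ μ in (-1 : ℝ)..1, μ * px f t x μ)
            - 2 * (α x * avg f t x) + 2 * G x) := by
          rw [hν1, intervalIntegral.integral_of_le hD.le]
      _ = -2 * (∫ x in xL..xR, α x * avg f t x) + 2 * ∫ x in xL..xR, G x := by
          rw [intervalIntegral.integral_add
            ((((hIpxc.intervalIntegrable _ _).const_mul _).sub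
              ((show IntervalIntegrable (fun x => α x * avg f t x) volume xL xR from (hα.continuous.mul havgc).intervalIntegrable xL xR).const_mul _)))
            ((hG.continuous.intervalIntegrable _ _).const_mul _)]
          rw [intervalIntegral.integral_sub ((hIpxc.intervalIntegrable _ _).const_mul _)
            ((show IntervalIntegrable (fun x => α x * avg f t x) volume xL xR from (hα.continuous.mul havgc).intervalIntegrable xL xR).const_mul _)]
          rw [intervalIntegral.integral_const_mul, intervalIntegral.integral_const_mul,
            intervalIntegral.integral_const_mul, hswap0]
          ring
  rw [hd2.deriv, hQ]
  ring
end

section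
/- Suppose f is three times continuously differentiable and satisfies the scaled 1D LRTE on τ × D × [-1,1]. Then for every (t,x,μ) ∈ τ × D × [-1,1], the iterated expansion identity holds: f = ρ − (ε/σ(x)) μ ∂_x ρ − (ε²/σ(x)) ( ∂_t ρ − μ ∂_x((1/σ) μ ∂_x ρ) + α(x) f − G(x) ) + ε³ 𝒜(f) + ε⁴ ℬ(f), where 𝒜 and ℬ are the macroscopic auxiliary operators. -/
open MeasureTheory Real intervalIntegral

/-- The macroscopic auxiliary operator
`𝒜(f) = (1/σ) ∂_t((1/σ) μ ∂_x f) + (1/σ) μ ∂_x( (1/σ)( ∂_t f + α f − G − μ ∂_x((1/σ) μ ∂_x f) ) )`. -/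
noncomputable def opA (σ α G : ℝ → ℝ) (f : ℝ → ℝ → ℝ → ℝ) : ℝ → ℝ → ℝ → ℝ :=
  fun t x μ =>
    (1 / σ x) * pt (fun t' x' μ' => (1 / σ x') * μ' * px f t' x' μ') t x μ
    + (1 / σ x) * μ *
        px (fun t' x' μ' => (1 / σ x') *
          (pt f t' x' μ' + α x' * f t' x' μ' - G x'
            - μ' * px (fun s y ν => (1 / σ y) * ν * px f s y ν) t' x' μ')) t x μ

/-- The macroscopic auxiliary operator
`ℬ(f) = (1/σ²) ∂_t( ∂_t f + α f − G ) − (1/σ) μ ∂_x( (1/σ) μ ∂_x( (1/σ)( ∂_t f + α f − G ) ) )`. -/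
noncomputable def opB (σ α G : ℝ → ℝ) (f : ℝ → ℝ → ℝ → ℝ) : ℝ → ℝ → ℝ → ℝ :=
  fun t x μ =>
    (1 / (σ x) ^ 2) * pt (fun t' x' μ' => pt f t' x' μ' + α x' * f t' x' μ' - G x') t x μ
    - (1 / σ x) * μ *
        px (fun t' x' μ' => (1 / σ x') * μ' *
          px (fun s y ν => (1 / σ y) * (pt f s y ν + α y * f s y ν - G y)) t' x' μ') t x μ

namespace LRTEaux

noncomputable def dX (W : ℝ × ℝ × ℝ → ℝ) (q : ℝ × ℝ × ℝ) : ℝ :=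
  fderiv ℝ W q ((0:ℝ), (1:ℝ), (0:ℝ))
noncomputable def dT (W : ℝ × ℝ × ℝ → ℝ) (q : ℝ × ℝ × ℝ) : ℝ :=
  fderiv ℝ W q ((1:ℝ), (0:ℝ), (0:ℝ))

lemma hasDerivAt_p1 (W : ℝ × ℝ × ℝ → ℝ) {t x μ : ℝ} (h : DifferentiableAt ℝ W (t, x, μ)) :
    HasDerivAt (fun s => W (s, x, μ)) (dT W (t, x, μ)) t :=
  h.hasFDerivAt.comp_hasDerivAt t (HasDerivAt.prodMk (hasDerivAt_id t) (hasDerivAt_const t (x, μ)))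

lemma hasDerivAt_p2 (W : ℝ × ℝ × ℝ → ℝ) {t x μ : ℝ} (h : DifferentiableAt ℝ W (t, x, μ)) :
    HasDerivAt (fun y => W (t, y, μ)) (dX W (t, x, μ)) x :=
  h.hasFDerivAt.comp_hasDerivAt x
    (HasDerivAt.prodMk (hasDerivAt_const x t) (HasDerivAt.prodMk (hasDerivAt_id x) (hasDerivAt_const x μ)))

lemma hasDerivAt_q1 (g : ℝ × ℝ → ℝ) {a b : ℝ} (h : DifferentiableAt ℝ g (a, b)) :
    HasDerivAt (fun y => g (y, b)) (fderiv ℝ g (a, b) ((1:ℝ), (0:ℝ))) a :=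
  h.hasFDerivAt.comp_hasDerivAt a (HasDerivAt.prodMk (hasDerivAt_id a) (hasDerivAt_const a b))

lemma contDiff_dX {n : ℕ} (W : ℝ × ℝ × ℝ → ℝ) (h : ContDiff ℝ (n + 1 : ℕ) W) :
    ContDiff ℝ (n : ℕ) (dX W) :=
  (h.fderiv_right (by norm_cast)).clm_apply contDiff_const
lemma contDiff_dT {n : ℕ} (W : ℝ × ℝ × ℝ → ℝ) (h : ContDiff ℝ (n + 1 : ℕ) W) :
    ContDiff ℝ (n : ℕ) (dT W) :=
  (h.fderiv_right (by norm_cast)).clm_apply contDiff_const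

open Metric in
lemma key_param (g : ℝ × ℝ → ℝ) (hg : ContDiff ℝ 1 g) (x : ℝ) :
    HasDerivAt (fun y => ∫ m in (-1:ℝ)..1, g (y, m))
      (∫ m in (-1:ℝ)..1, fderiv ℝ g (x, m) ((1:ℝ), (0:ℝ))) x := by
  have hgc : Continuous g := hg.continuous
  have hDc : Continuous (fun q : ℝ × ℝ => fderiv ℝ g q ((1:ℝ), (0:ℝ))) := by
    have h0 : ContDiff ℝ 0 (fun q : ℝ × ℝ => fderiv ℝ g q ((1:ℝ), (0:ℝ))) :=
      (hg.fderiv_right (by norm_num)).clm_apply contDiff_const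
    exact h0.continuous
  have hK : IsCompact (closedBall x 1 ×ˢ Set.uIcc (-1:ℝ) 1) :=
    (isCompact_closedBall x 1).prod isCompact_uIcc
  obtain ⟨M, hM⟩ := hK.exists_bound_of_continuousOn hDc.continuousOn
  have hdiffg : Differentiable ℝ g := hg.differentiable (by norm_num)
  have := intervalIntegral.hasDerivAt_integral_of_dominated_loc_of_deriv_le
    (F := fun y m => g (y, m)) (F' := fun y m => fderiv ℝ g (y, m) ((1:ℝ), (0:ℝ)))
    (x₀ := x) (a := (-1:ℝ)) (b := 1) (bound := fun _ => M) (μ := volume)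
    (s := ball x 1) (ball_mem_nhds x one_pos)
    (Filter.Eventually.of_forall fun y =>
      ((hgc.comp (continuous_const.prodMk continuous_id)).aestronglyMeasurable))
    ((hgc.comp (continuous_const.prodMk continuous_id)).intervalIntegrable _ _)
    ((hDc.comp (continuous_const.prodMk continuous_id)).aestronglyMeasurable)
    (Filter.Eventually.of_forall fun m hm y hy =>
      hM (y, m) ⟨ball_subset_closedBall hy, Set.uIoc_subset_uIcc hm⟩)
    intervalIntegrable_const
    (Filter.Eventually.of_forall fun m hm y hy => hasDerivAt_q1 g (hdiffg _))
  exact this.2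

variable (σ α G : ℝ → ℝ) (f : ℝ → ℝ → ℝ → ℝ)

def WF : ℝ × ℝ × ℝ → ℝ := fun p => f p.1 p.2.1 p.2.2
noncomputable def WA : ℝ × ℝ × ℝ → ℝ := fun p => 1 / σ p.2.1 * p.2.2 * dX (WF f) p
noncomputable def WD : ℝ × ℝ × ℝ → ℝ :=
  fun p => dT (WF f) p + α p.2.1 * f p.1 p.2.1 p.2.2 - G p.2.1
noncomputable def WC : ℝ × ℝ × ℝ → ℝ := fun p => 1 / σ p.2.1 * WD α G f p
noncomputable def WLA : ℝ × ℝ × ℝ → ℝ := fun p => 1 / σ p.2.1 * p.2.2 * dX (WA σ f) p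
noncomputable def WLC : ℝ × ℝ × ℝ → ℝ := fun p => 1 / σ p.2.1 * p.2.2 * dX (WC σ α G f) p
noncomputable def WIA : ℝ × ℝ × ℝ → ℝ :=
  fun p => 1 / σ p.2.1 * (WD α G f p - p.2.2 * dX (WA σ f) p)

variable {σ α G f}

lemma cinv (hσ : ContDiff ℝ 2 σ) (hσpos : ∀ x, 0 < σ x) :
    ContDiff ℝ 2 (fun p : ℝ × ℝ × ℝ => 1 / σ p.2.1) :=
  contDiff_const.div (hσ.comp (contDiff_fst.comp contDiff_snd)) (fun p => (hσpos p.2.1).ne')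

lemma cμ : ContDiff ℝ 2 (fun p : ℝ × ℝ × ℝ => p.2.2) := contDiff_snd.comp contDiff_snd

lemma cWA (hσ : ContDiff ℝ 2 σ) (hσpos : ∀ x, 0 < σ x) (hf : ContDiff ℝ 3 (WF f)) :
    ContDiff ℝ 2 (WA σ f) :=
  ((cinv hσ hσpos).mul cμ).mul (contDiff_dX (n := 2) _ (by exact_mod_cast hf))

lemma cWD (hα : ContDiff ℝ 1 α) (hG : ContDiff ℝ 1 G) (hf : ContDiff ℝ 3 (WF f)) :
    ContDiff ℝ 1 (WD α G f) :=
  (((contDiff_dT (n := 2) _ (by exact_mod_cast hf)).of_le (by norm_cast)).add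
    ((hα.comp (contDiff_fst.comp contDiff_snd)).mul (hf.of_le (by norm_cast)))).sub
    (hG.comp (contDiff_fst.comp contDiff_snd))

lemma cWC (hσ : ContDiff ℝ 2 σ) (hσpos : ∀ x, 0 < σ x) (hα : ContDiff ℝ 1 α)
    (hG : ContDiff ℝ 1 G) (hf : ContDiff ℝ 3 (WF f)) : ContDiff ℝ 1 (WC σ α G f) :=
  ((cinv hσ hσpos).of_le (by norm_cast)).mul (cWD hα hG hf)

lemma cWLA (hσ : ContDiff ℝ 2 σ) (hσpos : ∀ x, 0 < σ x) (hf : ContDiff ℝ 3 (WF f)) :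
    ContDiff ℝ 1 (WLA σ f) :=
  ((((cinv hσ hσpos).mul cμ).of_le (by norm_cast))).mul
    (contDiff_dX (n := 1) _ (by exact_mod_cast cWA hσ hσpos hf))

lemma cWIA (hσ : ContDiff ℝ 2 σ) (hσpos : ∀ x, 0 < σ x) (hα : ContDiff ℝ 1 α)
    (hG : ContDiff ℝ 1 G) (hf : ContDiff ℝ 3 (WF f)) : ContDiff ℝ 1 (WIA σ α G f) :=
  ((cinv hσ hσpos).of_le (by norm_cast)).mul
    ((cWD hα hG hf).sub ((cμ.of_le (by norm_cast)).mul
      (contDiff_dX (n := 1) _ (by exact_mod_cast cWA hσ hσpos hf))))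

lemma WIA_split : WIA σ α G f = fun p => WC σ α G f p - WLA σ f p := by
  funext p; simp only [WIA, WC, WLA]; ring

lemma dX_WIA (hσ : ContDiff ℝ 2 σ) (hσpos : ∀ x, 0 < σ x) (hα : ContDiff ℝ 1 α)
    (hG : ContDiff ℝ 1 G) (hf : ContDiff ℝ 3 (WF f)) (p : ℝ × ℝ × ℝ) :
    dX (WIA σ α G f) p = dX (WC σ α G f) p - dX (WLA σ f) p := by
  rw [WIA_split]
  simp only [dX]
  rw [fderiv_fun_sub ((cWC hσ hσpos hα hG hf).differentiable (by norm_num) p)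
    ((cWLA hσ hσpos hf).differentiable (by norm_num) p)]
  rfl

lemma dT_WC (hσ : ContDiff ℝ 2 σ) (hσpos : ∀ x, 0 < σ x) (hα : ContDiff ℝ 1 α)
    (hG : ContDiff ℝ 1 G) (hf : ContDiff ℝ 3 (WF f)) (p : ℝ × ℝ × ℝ) :
    dT (WC σ α G f) p = 1 / σ p.2.1 * dT (WD α G f) p := by
  have hq : HasFDerivAt (fun p : ℝ × ℝ × ℝ => 1 / σ p.2.1)
      ((deriv (fun z => 1 / σ z) p.2.1) •
        ((ContinuousLinearMap.fst ℝ ℝ ℝ).comp (ContinuousLinearMap.snd ℝ ℝ (ℝ × ℝ)))) p := by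
    have h1 : HasDerivAt (fun z => 1 / σ z) (deriv (fun z => 1 / σ z) p.2.1) p.2.1 :=
      (((contDiff_const.div hσ (fun x => (hσpos x).ne')).differentiable
        (by norm_num)) p.2.1).hasDerivAt
    exact HasDerivAt.comp_hasFDerivAt (f := fun p : ℝ × ℝ × ℝ => p.2.1) p h1
      (((ContinuousLinearMap.fst ℝ ℝ ℝ).comp
        (ContinuousLinearMap.snd ℝ ℝ (ℝ × ℝ))).hasFDerivAt)
  have hd : HasFDerivAt (WD α G f) (fderiv ℝ (WD α G f) p) p :=
    ((cWD hα hG hf).differentiable (by norm_num) p).hasFDerivAt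
  have hmul := hq.mul hd
  have hWCeq : WC σ α G f = fun p => (fun p : ℝ × ℝ × ℝ => 1 / σ p.2.1) p * WD α G f p := rfl
  rw [dT, hWCeq, HasFDerivAt.fderiv
    (f := fun p => (fun p : ℝ × ℝ × ℝ => 1 / σ p.2.1) p * WD α G f p) hmul]
  simp [dT]

end LRTEaux

open LRTEaux

/-- If `f` is three times continuously differentiable and satisfies the scaled 1D LRTE on
`τ × D × [-1,1]`, then the iterated expansion identity holds there:
`f = ρ − (ε/σ) μ ∂_x ρ − (ε²/σ)( ∂_t ρ − μ ∂_x((1/σ) μ ∂_x ρ) + α f − G ) + ε³ 𝒜(f) + ε⁴ ℬ(f)`. -/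
theorem iterated_expansion_identity
    (ε T xL xR : ℝ) (σ α G : ℝ → ℝ) (f : ℝ → ℝ → ℝ → ℝ)
    (hε : 0 < ε) (hT : 0 < T) (hD : xL < xR)
    (hσ : ContDiff ℝ 2 σ) (hσpos : ∀ x, 0 < σ x)
    (hα : ContDiff ℝ 1 α) (hG : ContDiff ℝ 1 G)
    (hf : ContDiff ℝ 3 (fun p : ℝ × ℝ × ℝ => f p.1 p.2.1 p.2.2))
    (hsol : SolvesLRTE ε T xL xR σ α G f) :
    ∀ t ∈ Set.Ioo (0 : ℝ) T, ∀ x ∈ Set.Ioo xL xR, ∀ μ ∈ Set.Icc (-1 : ℝ) 1,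
      f t x μ = avg f t x
        - (ε / σ x) * μ * deriv (fun y => avg f t y) x
        - (ε ^ 2 / σ x) *
            (deriv (fun s => avg f s x) t
              - μ * deriv (fun y => (1 / σ y) * μ * deriv (fun y' => avg f t y') y) x
              + α x * f t x μ - G x)
        + ε ^ 3 * opA σ α G f t x μ + ε ^ 4 * opB σ α G f t x μ := by
  have hf' : ContDiff ℝ 3 (WF f) := hf
  have hdF : Differentiable ℝ (WF f) := hf'.differentiable (by norm_num)
  have hdWA : Differentiable ℝ (WA σ f) := (cWA hσ hσpos hf').differentiable (by norm_num)
  have hdWC : Differentiable ℝ (WC σ α G f) :=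
    (cWC hσ hσpos hα hG hf').differentiable (by norm_num)
  have hdWD : Differentiable ℝ (WD α G f) := (cWD hα hG hf').differentiable (by norm_num)
  have hdWLA : Differentiable ℝ (WLA σ f) := (cWLA hσ hσpos hf').differentiable (by norm_num)
  have hdWIA : Differentiable ℝ (WIA σ α G f) :=
    (cWIA hσ hσpos hα hG hf').differentiable (by norm_num)
  have hinvd : Differentiable ℝ (fun z : ℝ => 1 / σ z) :=
    (contDiff_const.div hσ fun z => (hσpos z).ne').differentiable (by norm_num)
  -- partial derivatives of f as fderiv applications
  have hpt : ∀ a b c : ℝ, pt f a b c = dT (WF f) (a, b, c) := fun a b c =>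
    (hasDerivAt_p1 (WF f) (hdF (a, b, c))).deriv
  have hpx : ∀ a b c : ℝ, px f a b c = dX (WF f) (a, b, c) := fun a b c =>
    (hasDerivAt_p2 (WF f) (hdF (a, b, c))).deriv
  -- the lambdas appearing in the statement, rewritten as curried smooth functions
  have hA_eq : (fun s y ν => (1 / σ y) * ν * px f s y ν)
      = fun a b c => WA σ f (a, b, c) := by
    funext a b c; rw [hpx]; rfl
  have hC_eq : (fun s y ν => (1 / σ y) * (pt f s y ν + α y * f s y ν - G y))
      = fun a b c => WC σ α G f (a, b, c) := by
    funext a b c; rw [hpt]; rfl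
  have hpxA : ∀ a b c : ℝ, px (fun s y ν => (1 / σ y) * ν * px f s y ν) a b c
      = dX (WA σ f) (a, b, c) := by
    intro a b c; rw [hA_eq]
    exact (hasDerivAt_p2 (WA σ f) (hdWA (a, b, c))).deriv
  have hpxC : ∀ a b c : ℝ,
      px (fun s y ν => (1 / σ y) * (pt f s y ν + α y * f s y ν - G y)) a b c
      = dX (WC σ α G f) (a, b, c) := by
    intro a b c; rw [hC_eq]
    exact (hasDerivAt_p2 (WC σ α G f) (hdWC (a, b, c))).deriv
  have hIA_eq : (fun t' x' μ' => (1 / σ x') *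
        (pt f t' x' μ' + α x' * f t' x' μ' - G x'
          - μ' * px (fun s y ν => (1 / σ y) * ν * px f s y ν) t' x' μ'))
      = fun a b c => WIA σ α G f (a, b, c) := by
    funext a b c; rw [hpt, hpxA]; rfl
  have hD_eq : (fun t' x' μ' => pt f t' x' μ' + α x' * f t' x' μ' - G x')
      = fun a b c => WD α G f (a, b, c) := by
    funext a b c; rw [hpt]; rfl
  have hLC_eq : (fun t' x' μ' => (1 / σ x') * μ' *
        px (fun s y ν => (1 / σ y) * (pt f s y ν + α y * f s y ν - G y)) t' x' μ')
      = fun a b c => WLC σ α G f (a, b, c) := by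
    funext a b c; rw [hpxC]; rfl
  -- the basic expansion from the equation
  have key1 : ∀ t' ∈ Set.Ioo (0:ℝ) T, ∀ μ' ∈ Set.Icc (-1:ℝ) 1, ∀ x' ∈ Set.Ioo xL xR,
      f t' x' μ' = avg f t' x'
        - ε * WA σ f (t', x', μ') - ε ^ 2 * WC σ α G f (t', x', μ') := by
    intro t' ht' μ' hμ' x' hx'
    have h := hsol t' ht' x' hx' μ' hμ'
    rw [hpt, hpx] at h
    have hσ' : σ x' ≠ 0 := (hσpos x').ne'
    simp only [WA, WC, WD]
    field_simp
    linear_combination h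
  intro t ht x hx μ hμ
  -- differentiability of the angular average in x (at every point), with derivative
  have hg1 : ContDiff ℝ 1 (fun q : ℝ × ℝ => WF f (t, q.1, q.2)) :=
    (hf'.of_le (by norm_num)).comp (contDiff_const.prodMk (contDiff_fst.prodMk contDiff_snd))
  have hg2 : ContDiff ℝ 1 (fun q : ℝ × ℝ => dX (WF f) (t, q.1, q.2)) :=
    ((contDiff_dX (n := 2) _ (by exact_mod_cast hf')).of_le (by norm_num)).comp
      (contDiff_const.prodMk (contDiff_fst.prodMk contDiff_snd))
  have hρxHas : ∀ y : ℝ, HasDerivAt (fun y' => avg f t y')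
      (1 / 2 * ∫ m in (-1:ℝ)..1, dX (WF f) (t, y, m)) y := by
    intro y
    have h0 := HasDerivAt.const_mul (1/2 : ℝ)
      (key_param (fun q : ℝ × ℝ => WF f (t, q.1, q.2)) hg1 y)
    have hcong : (∫ m in (-1:ℝ)..1,
          fderiv ℝ (fun q : ℝ × ℝ => WF f (t, q.1, q.2)) (y, m) ((1:ℝ), (0:ℝ)))
        = ∫ m in (-1:ℝ)..1, dX (WF f) (t, y, m) := by
      apply intervalIntegral.integral_congr
      intro m _
      exact (hasDerivAt_q1 _ (hg1.differentiable (by norm_num) (y, m))).unique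
        (hasDerivAt_p2 (WF f) (hdF (t, y, m)))
    rw [hcong] at h0
    exact h0
  have hρx_eq : ∀ y : ℝ, deriv (fun y' => avg f t y') y
      = 1 / 2 * ∫ m in (-1:ℝ)..1, dX (WF f) (t, y, m) := fun y => (hρxHas y).deriv
  have hρfn : DifferentiableAt ℝ
      (fun y => 1 / 2 * ∫ m in (-1:ℝ)..1, dX (WF f) (t, y, m)) x :=
    (HasDerivAt.const_mul (1/2 : ℝ)
      (key_param (fun q : ℝ × ℝ => dX (WF f) (t, q.1, q.2)) hg2 x)).differentiableAt
  have hLρ : DifferentiableAt ℝ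
      (fun y => 1 / σ y * μ * (1 / 2 * ∫ m in (-1:ℝ)..1, dX (WF f) (t, y, m))) x :=
    (((hinvd x).mul_const μ).mul hρfn)
  -- differentiability of the angular average in t
  have hgT : ContDiff ℝ 1 (fun q : ℝ × ℝ => WF f (q.1, x, q.2)) :=
    (hf'.of_le (by norm_num)).comp (contDiff_fst.prodMk (contDiff_const.prodMk contDiff_snd))
  have hρtd : DifferentiableAt ℝ (fun s => avg f s x) t :=
    (HasDerivAt.const_mul (1/2 : ℝ)
      (key_param (fun q : ℝ × ℝ => WF f (q.1, x, q.2)) hgT t)).differentiableAt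
  have hρtHas : HasDerivAt (fun s => avg f s x) (deriv (fun s => avg f s x) t) t :=
    hρtd.hasDerivAt
  -- differentiate key1 in x, at every y in the interval
  have h3 : ∀ y ∈ Set.Ioo xL xR, dX (WF f) (t, y, μ)
      = (1 / 2 * ∫ m in (-1:ℝ)..1, dX (WF f) (t, y, m))
        - ε * dX (WA σ f) (t, y, μ) - ε ^ 2 * dX (WC σ α G f) (t, y, μ) := by
    intro y hy
    have hev : (fun y' => f t y' μ) =ᶠ[nhds y]
        (fun y' => avg f t y' - ε * WA σ f (t, y', μ) - ε ^ 2 * WC σ α G f (t, y', μ)) := by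
      filter_upwards [Ioo_mem_nhds hy.1 hy.2] with z hz
      exact key1 t ht μ hμ z hz
    have hL : HasDerivAt (fun y' => f t y' μ) (dX (WF f) (t, y, μ)) y :=
      hasDerivAt_p2 (WF f) (hdF (t, y, μ))
    have hR : HasDerivAt
        (fun y' => avg f t y' - ε * WA σ f (t, y', μ) - ε ^ 2 * WC σ α G f (t, y', μ))
        ((1 / 2 * ∫ m in (-1:ℝ)..1, dX (WF f) (t, y, m))
          - ε * dX (WA σ f) (t, y, μ) - ε ^ 2 * dX (WC σ α G f) (t, y, μ)) y :=
      ((hρxHas y).sub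
        (HasDerivAt.const_mul ε (hasDerivAt_p2 (WA σ f) (hdWA (t, y, μ))))).sub
        (HasDerivAt.const_mul (ε ^ 2) (hasDerivAt_p2 (WC σ α G f) (hdWC (t, y, μ))))
    exact hL.deriv.symm.trans (hev.deriv_eq.trans hR.deriv)
  -- differentiate key1 in t, at the point t
  have h4 : dT (WF f) (t, x, μ)
      = deriv (fun s => avg f s x) t
        - ε * dT (WA σ f) (t, x, μ) - ε ^ 2 * dT (WC σ α G f) (t, x, μ) := by
    have hev : (fun s => f s x μ) =ᶠ[nhds t]
        (fun s => avg f s x - ε * WA σ f (s, x, μ) - ε ^ 2 * WC σ α G f (s, x, μ)) := by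
      filter_upwards [Ioo_mem_nhds ht.1 ht.2] with z hz
      exact key1 z hz μ hμ x hx
    have hL : HasDerivAt (fun s => f s x μ) (dT (WF f) (t, x, μ)) t :=
      hasDerivAt_p1 (WF f) (hdF (t, x, μ))
    have hR : HasDerivAt
        (fun s => avg f s x - ε * WA σ f (s, x, μ) - ε ^ 2 * WC σ α G f (s, x, μ))
        (deriv (fun s => avg f s x) t
          - ε * dT (WA σ f) (t, x, μ) - ε ^ 2 * dT (WC σ α G f) (t, x, μ)) t :=
      (hρtHas.sub
        (HasDerivAt.const_mul ε (hasDerivAt_p1 (WA σ f) (hdWA (t, x, μ))))).sub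
        (HasDerivAt.const_mul (ε ^ 2) (hasDerivAt_p1 (WC σ α G f) (hdWC (t, x, μ))))
    exact hL.deriv.symm.trans (hev.deriv_eq.trans hR.deriv)
  -- pointwise identity for WLC on the interval
  have h5 : ∀ y ∈ Set.Ioo xL xR, WLC σ α G f (t, y, μ)
      = (ε ^ 2)⁻¹ * (1 / σ y * μ * (1 / 2 * ∫ m in (-1:ℝ)..1, dX (WF f) (t, y, m))
          - WA σ f (t, y, μ) - ε * WLA σ f (t, y, μ)) := by
    intro y hy
    have h := h3 y hy
    have hσ' : σ y ≠ 0 := (hσpos y).ne'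
    have hε' : ε ≠ 0 := hε.ne'
    simp only [WLC, WLA, WA]
    rw [h]
    field_simp
    ring
  -- derivative of the WLC identity at x
  have hevLC : (fun y => WLC σ α G f (t, y, μ)) =ᶠ[nhds x]
      (fun y => (ε ^ 2)⁻¹ *
        (1 / σ y * μ * (1 / 2 * ∫ m in (-1:ℝ)..1, dX (WF f) (t, y, m))
          - WA σ f (t, y, μ) - ε * WLA σ f (t, y, μ))) := by
    filter_upwards [Ioo_mem_nhds hx.1 hx.2] with z hz
    exact h5 z hz
  have hRLC : HasDerivAt
      (fun y => (ε ^ 2)⁻¹ *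
        (1 / σ y * μ * (1 / 2 * ∫ m in (-1:ℝ)..1, dX (WF f) (t, y, m))
          - WA σ f (t, y, μ) - ε * WLA σ f (t, y, μ)))
      ((ε ^ 2)⁻¹ *
        (deriv (fun y => 1 / σ y * μ * (1 / 2 * ∫ m in (-1:ℝ)..1, dX (WF f) (t, y, m))) x
          - dX (WA σ f) (t, x, μ) - ε * dX (WLA σ f) (t, x, μ))) x :=
    HasDerivAt.const_mul _ ((hLρ.hasDerivAt.sub
      (hasDerivAt_p2 (WA σ f) (hdWA (t, x, μ)))).sub
      (HasDerivAt.const_mul ε (hasDerivAt_p2 (WLA σ f) (hdWLA (t, x, μ)))))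
  have hE4 : deriv (fun y => WLC σ α G f (t, y, μ)) x
      = (ε ^ 2)⁻¹ *
        (deriv (fun y => 1 / σ y * μ * (1 / 2 * ∫ m in (-1:ℝ)..1, dX (WF f) (t, y, m))) x
          - dX (WA σ f) (t, x, μ) - ε * dX (WLA σ f) (t, x, μ)) :=
    hevLC.deriv_eq.trans hRLC.deriv
  have hε2 : (ε : ℝ) ^ 2 ≠ 0 := pow_ne_zero 2 hε.ne'
  have hE4' : ε ^ 2 * deriv (fun y => WLC σ α G f (t, y, μ)) x
      = deriv (fun y => 1 / σ y * μ * (1 / 2 * ∫ m in (-1:ℝ)..1, dX (WF f) (t, y, m))) x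
        - dX (WA σ f) (t, x, μ) - ε * dX (WLA σ f) (t, x, μ) := by
    rw [hE4, ← mul_assoc, mul_inv_cancel₀ hε2, one_mul]
  -- values of opA and opB
  have hopA : opA σ α G f t x μ
      = 1 / σ x * dT (WA σ f) (t, x, μ)
        + 1 / σ x * μ * (dX (WC σ α G f) (t, x, μ) - dX (WLA σ f) (t, x, μ)) := by
    simp only [opA]
    rw [hIA_eq, hA_eq]
    rw [show pt (fun a b c => WA σ f (a, b, c)) t x μ = dT (WA σ f) (t, x, μ) from
      (hasDerivAt_p1 (WA σ f) (hdWA (t, x, μ))).deriv]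
    rw [show px (fun a b c => WIA σ α G f (a, b, c)) t x μ = dX (WIA σ α G f) (t, x, μ) from
      (hasDerivAt_p2 (WIA σ α G f) (hdWIA (t, x, μ))).deriv]
    rw [dX_WIA hσ hσpos hα hG hf' (t, x, μ)]
  have hopB : opB σ α G f t x μ
      = 1 / (σ x) ^ 2 * dT (WD α G f) (t, x, μ)
        - 1 / σ x * μ * deriv (fun y => WLC σ α G f (t, y, μ)) x := by
    simp only [opB]
    rw [hD_eq, hLC_eq]
    rw [show pt (fun a b c => WD α G f (a, b, c)) t x μ = dT (WD α G f) (t, x, μ) from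
      (hasDerivAt_p1 (WD α G f) (hdWD (t, x, μ))).deriv]
    rfl
  have e7 : dT (WC σ α G f) (t, x, μ) = 1 / σ x * dT (WD α G f) (t, x, μ) :=
    dT_WC hσ hσpos hα hG hf' (t, x, μ)
  have e1 : f t x μ = avg f t x - ε * WA σ f (t, x, μ) - ε ^ 2 * WC σ α G f (t, x, μ) :=
    key1 t ht μ hμ x hx
  have e2 := h3 x hx
  have e5 : WA σ f (t, x, μ) = 1 / σ x * μ * dX (WF f) (t, x, μ) := rfl
  have e6 : WC σ α G f (t, x, μ)
      = 1 / σ x * (dT (WF f) (t, x, μ) + α x * f t x μ - G x) := rfl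
  rw [hopA, hopB]
  simp only [hρx_eq]
  linear_combination e1 - ε * e5 - (ε * (1 / σ x) * μ) * e2 - ε ^ 2 * e6
    - (ε ^ 2 * (1 / σ x)) * h4 + (ε ^ 4 * (1 / σ x)) * e7
    + (ε ^ 2 * (1 / σ x) * μ) * hE4'
end

section
/- Suppose f is three times continuously differentiable and satisfies the scaled 1D LRTE on τ × D × [-1,1]. Then for any measurable weight λ : D → ℝ, the MA-APNN governing loss evaluated at f vanishes: ∫_τ ∫_D ∫_{-1}^{1} λ(x) | ε² ∂_t f + ε μ ∂_x f − σ(x)(ρ − f) + ε² α(x) f − ε² G(x) |² dμ dx dt + ∫_τ ∫_D (1 − λ(x)) | ∂_t ρ − (1/3) ∂_x((1/σ) ∂_x ρ) + α ρ − G − ε ⟨σ 𝒜(f)⟩ − ε² ⟨σ ℬ(f)⟩ |² dx dt = 0. In particular the exact smooth solution is a zero of the MA-APNN governing loss (consistency). -/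
open MeasureTheory Real intervalIntegral

open Set Metric

noncomputable def MDT (Φ : ℝ × ℝ × ℝ → ℝ) : ℝ × ℝ × ℝ → ℝ := fun p => fderiv ℝ Φ p (1, 0, 0)
noncomputable def MDX (Φ : ℝ × ℝ × ℝ → ℝ) : ℝ × ℝ × ℝ → ℝ := fun p => fderiv ℝ Φ p (0, 1, 0)

def MFu (f : ℝ → ℝ → ℝ → ℝ) : ℝ × ℝ × ℝ → ℝ := fun p => f p.1 p.2.1 p.2.2
noncomputable def MFT (f : ℝ → ℝ → ℝ → ℝ) := MDT (MFu f)
noncomputable def MFX (f : ℝ → ℝ → ℝ → ℝ) := MDX (MFu f)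
noncomputable def MFXX (f : ℝ → ℝ → ℝ → ℝ) := MDX (MFX f)
noncomputable def MFXXX (f : ℝ → ℝ → ℝ → ℝ) := MDX (MFXX f)
noncomputable def MHU (σ : ℝ → ℝ) (f : ℝ → ℝ → ℝ → ℝ) : ℝ × ℝ × ℝ → ℝ :=
  fun p => (1 / σ p.2.1) * p.2.2 * MFX f p
noncomputable def MHT (σ : ℝ → ℝ) (f : ℝ → ℝ → ℝ → ℝ) := MDT (MHU σ f)
noncomputable def MHX (σ : ℝ → ℝ) (f : ℝ → ℝ → ℝ → ℝ) := MDX (MHU σ f)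
noncomputable def MHXX (σ : ℝ → ℝ) (f : ℝ → ℝ → ℝ → ℝ) := MDX (MHX σ f)
noncomputable def MGU (σ α G : ℝ → ℝ) (f : ℝ → ℝ → ℝ → ℝ) : ℝ × ℝ × ℝ → ℝ :=
  fun p => (1 / σ p.2.1) * (MFT f p + α p.2.1 * MFu f p - G p.2.1)
noncomputable def MGT (σ α G : ℝ → ℝ) (f : ℝ → ℝ → ℝ → ℝ) := MDT (MGU σ α G f)
noncomputable def MGX (σ α G : ℝ → ℝ) (f : ℝ → ℝ → ℝ → ℝ) := MDX (MGU σ α G f)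
noncomputable def MKU (σ α G : ℝ → ℝ) (f : ℝ → ℝ → ℝ → ℝ) : ℝ × ℝ × ℝ → ℝ :=
  fun p => (1 / σ p.2.1) * (MFT f p + α p.2.1 * MFu f p - G p.2.1 - p.2.2 * MHX σ f p)
noncomputable def MKX (σ α G : ℝ → ℝ) (f : ℝ → ℝ → ℝ → ℝ) := MDX (MKU σ α G f)
noncomputable def MP1 (f : ℝ → ℝ → ℝ → ℝ) (t x : ℝ) : ℝ :=
  (1 / 2) * ∫ μ in (-1 : ℝ)..1, MFX f (t, x, μ)
noncomputable def MP2 (f : ℝ → ℝ → ℝ → ℝ) (t x : ℝ) : ℝ :=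
  (1 / 2) * ∫ μ in (-1 : ℝ)..1, MFXX f (t, x, μ)


noncomputable def MD1 (ε : ℝ) (σ : ℝ → ℝ) (f : ℝ → ℝ → ℝ → ℝ) (t y μ : ℝ) : ℝ :=
  (1 / ε ^ 2) * (MP1 f t y - MFX f (t, y, μ)) - (1 / ε) * MHX σ f (t, y, μ)
noncomputable def MD2 (ε : ℝ) (σ : ℝ → ℝ) (f : ℝ → ℝ → ℝ → ℝ) (t y μ : ℝ) : ℝ :=
  (1 / ε ^ 2) * (MP2 f t y - MFXX f (t, y, μ)) - (1 / ε) * MHXX σ f (t, y, μ)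

section bridges
variable {f : ℝ → ℝ → ℝ → ℝ} {σ α G : ℝ → ℝ}

lemma hasDerivAt_slice1 (Φ : ℝ × ℝ × ℝ → ℝ) {t x μ : ℝ}
    (hΦ : DifferentiableAt ℝ Φ (t, x, μ)) :
    HasDerivAt (fun s => Φ (s, x, μ)) (MDT Φ (t, x, μ)) t :=
  hΦ.hasFDerivAt.comp_hasDerivAt t
    (HasDerivAt.prodMk (hasDerivAt_id t) (HasDerivAt.prodMk (hasDerivAt_const t x) (hasDerivAt_const t μ)))

lemma hasDerivAt_slice2 (Φ : ℝ × ℝ × ℝ → ℝ) {t x μ : ℝ}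
    (hΦ : DifferentiableAt ℝ Φ (t, x, μ)) :
    HasDerivAt (fun y => Φ (t, y, μ)) (MDX Φ (t, x, μ)) x :=
  hΦ.hasFDerivAt.comp_hasDerivAt x
    (HasDerivAt.prodMk (hasDerivAt_const x t) (HasDerivAt.prodMk (hasDerivAt_id x) (hasDerivAt_const x μ)))

lemma contDiff_dapply (n : ℕ) (v : ℝ × ℝ × ℝ) (Φ : ℝ × ℝ × ℝ → ℝ)
    (hΦ : ContDiff ℝ (n + 1) Φ) : ContDiff ℝ n fun p => fderiv ℝ Φ p v :=
  (hΦ.fderiv_right (by exact_mod_cast le_refl ((n : ℕ∞) + 1))).clm_apply contDiff_const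

lemma pt_curried (Φ : ℝ × ℝ × ℝ → ℝ) (h : Differentiable ℝ Φ) (t x μ : ℝ) :
    pt (fun a b c => Φ (a, b, c)) t x μ = MDT Φ (t, x, μ) :=
  (hasDerivAt_slice1 Φ (h _)).deriv

lemma px_curried (Φ : ℝ × ℝ × ℝ → ℝ) (h : Differentiable ℝ Φ) (t x μ : ℝ) :
    px (fun a b c => Φ (a, b, c)) t x μ = MDX Φ (t, x, μ) :=
  (hasDerivAt_slice2 Φ (h _)).deriv

variable (hσ : ContDiff ℝ 2 σ) (hσpos : ∀ x, 0 < σ x)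
  (hα : ContDiff ℝ 1 α) (hG : ContDiff ℝ 1 G) (hf : ContDiff ℝ 3 (MFu f))

section
include hf

lemma hMFT : ContDiff ℝ 2 (MFT f) := contDiff_dapply 2 _ _ (by exact_mod_cast hf)
lemma hMFX : ContDiff ℝ 2 (MFX f) := contDiff_dapply 2 _ _ (by exact_mod_cast hf)
lemma hMFXX : ContDiff ℝ 1 (MFXX f) := contDiff_dapply 1 _ _ (by exact_mod_cast hMFX hf)
lemma hMFXXX : Continuous (MFXXX f) :=
  (contDiff_dapply 0 _ _ (by exact_mod_cast hMFXX hf)).continuous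

lemma ptf_eq (t x μ : ℝ) : pt f t x μ = MFT f (t, x, μ) :=
  (hasDerivAt_slice1 (MFu f) ((hf.differentiable (by norm_num)) _)).deriv

lemma pxf_eq (t x μ : ℝ) : px f t x μ = MFX f (t, x, μ) :=
  (hasDerivAt_slice2 (MFu f) ((hf.differentiable (by norm_num)) _)).deriv

end

section
include hσ hσpos

lemma hinvσ : ContDiff ℝ 2 (fun x => 1 / σ x) := by
  have h := hσ.inv (fun x => (hσpos x).ne')
  simp only [one_div]
  exact h

lemma hinvσ3 : ContDiff ℝ 2 (fun p : ℝ × ℝ × ℝ => 1 / σ p.2.1) :=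
  (hinvσ hσ hσpos).comp (contDiff_fst.comp contDiff_snd)

include hf
lemma hMHU : ContDiff ℝ 2 (MHU σ f) :=
  ((hinvσ3 hσ hσpos).mul (contDiff_snd.comp contDiff_snd)).mul (hMFX hf)

lemma hMHT : ContDiff ℝ 1 (MHT σ f) := contDiff_dapply 1 _ _ (by exact_mod_cast hMHU hσ hσpos hf)
lemma hMHX : ContDiff ℝ 1 (MHX σ f) := contDiff_dapply 1 _ _ (by exact_mod_cast hMHU hσ hσpos hf)
lemma hMHXX : Continuous (MHXX σ f) :=
  (contDiff_dapply 0 _ _ (by exact_mod_cast hMHX hσ hσpos hf)).continuous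

include hα hG
lemma hMGU : ContDiff ℝ 1 (MGU σ α G f) :=
  ((hinvσ3 hσ hσpos).of_le (by norm_num)).mul
    (((hMFT hf).of_le (by norm_num)).add
      ((hα.comp (contDiff_fst.comp contDiff_snd)).mul (hf.of_le (by norm_num))) |>.sub
      (hG.comp (contDiff_fst.comp contDiff_snd)))

lemma hMGT : Continuous (MGT σ α G f) :=
  (contDiff_dapply 0 _ _ (by exact_mod_cast hMGU hσ hσpos hα hG hf)).continuous
lemma hMGX : Continuous (MGX σ α G f) :=
  (contDiff_dapply 0 _ _ (by exact_mod_cast hMGU hσ hσpos hα hG hf)).continuous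

lemma hMKU : ContDiff ℝ 1 (MKU σ α G f) :=
  ((hinvσ3 hσ hσpos).of_le (by norm_num)).mul
    ((((hMFT hf).of_le (by norm_num)).add
      ((hα.comp (contDiff_fst.comp contDiff_snd)).mul (hf.of_le (by norm_num))) |>.sub
      (hG.comp (contDiff_fst.comp contDiff_snd))).sub
      ((contDiff_snd.comp contDiff_snd).mul (hMHX hσ hσpos hf)))

lemma hMKX : Continuous (MKX σ α G f) :=
  (contDiff_dapply 0 _ _ (by exact_mod_cast hMKU hσ hσpos hα hG hf)).continuous

end
end bridges

lemma swap_avg (Φ Φ' : ℝ → ℝ → ℝ) (a : ℝ)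
    (hC : Continuous fun p : ℝ × ℝ => Φ p.1 p.2)
    (hC' : Continuous fun p : ℝ × ℝ => Φ' p.1 p.2)
    (hd : ∀ b μ, HasDerivAt (fun b' => Φ b' μ) (Φ' b μ) b) :
    HasDerivAt (fun b => (1/2 : ℝ) * ∫ μ in (-1:ℝ)..1, Φ b μ)
      ((1/2 : ℝ) * ∫ μ in (-1:ℝ)..1, Φ' a μ) a := by
  have hK : IsCompact ((closedBall a 1) ×ˢ (Icc (-1:ℝ) 1)) :=
    (isCompact_closedBall a 1).prod isCompact_Icc
  obtain ⟨C, hbd⟩ := hK.exists_bound_of_continuousOn hC'.continuousOn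
  have main := intervalIntegral.hasDerivAt_integral_of_dominated_loc_of_deriv_le
    (F := fun b μ => Φ b μ) (F' := fun b μ => Φ' b μ) (bound := fun _ => C)
    (a := (-1:ℝ)) (b := 1) (x₀ := a) (μ := volume) (ball_mem_nhds a zero_lt_one)
    (Filter.Eventually.of_forall fun b =>
      ((hC.comp (Continuous.prodMk_right b)).aestronglyMeasurable))
    ((hC.comp (Continuous.prodMk_right a)).intervalIntegrable _ _)
    ((hC'.comp (Continuous.prodMk_right a)).aestronglyMeasurable)
    (Filter.Eventually.of_forall fun μ hμ b hb => by
      have hm : (b, μ) ∈ (closedBall a 1) ×ˢ (Icc (-1:ℝ) 1) := by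
        refine ⟨ball_subset_closedBall hb, ?_⟩
        have hsub : Set.uIoc (-1:ℝ) 1 ⊆ Icc (-1:ℝ) 1 := by
          rw [Set.uIoc_of_le (by norm_num : (-1:ℝ) ≤ 1)]
          exact Set.Ioc_subset_Icc_self
        exact hsub hμ
      exact hbd _ hm)
    (intervalIntegrable_const)
    (Filter.Eventually.of_forall fun μ hμ b hb => hd b μ)
  exact main.2.const_mul (1/2 : ℝ)

lemma contsl23 {Φ : ℝ × ℝ × ℝ → ℝ} (h : Continuous Φ) (t : ℝ) :
    Continuous fun p : ℝ × ℝ => Φ (t, p.1, p.2) :=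
  h.comp (continuous_const.prodMk (continuous_fst.prodMk continuous_snd))

lemma contsl13 {Φ : ℝ × ℝ × ℝ → ℝ} (h : Continuous Φ) (x : ℝ) :
    Continuous fun p : ℝ × ℝ => Φ (p.1, x, p.2) :=
  h.comp (continuous_fst.prodMk (continuous_const.prodMk continuous_snd))

section main
variable {f : ℝ → ℝ → ℝ → ℝ} {σ α G : ℝ → ℝ}
variable (hσ : ContDiff ℝ 2 σ) (hσpos : ∀ x, 0 < σ x)
  (hα : ContDiff ℝ 1 α) (hG : ContDiff ℝ 1 G) (hf : ContDiff ℝ 3 (MFu f))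

include hf

lemma hP1deriv (t y : ℝ) : HasDerivAt (fun y' => avg f t y') (MP1 f t y) y :=
  swap_avg (fun b μ => f t b μ) (fun b μ => MFX f (t, b, μ)) y
    (contsl23 (hf.continuous) t) (contsl23 (hMFX hf).continuous t)
    (fun b μ => hasDerivAt_slice2 (MFu f) ((hf.differentiable (by norm_num)) _))

lemma hP1d (t y : ℝ) : HasDerivAt (fun y' => MP1 f t y') (MP2 f t y) y :=
  swap_avg (fun b μ => MFX f (t, b, μ)) (fun b μ => MFXX f (t, b, μ)) y
    (contsl23 (hMFX hf).continuous t) (contsl23 (hMFXX hf).continuous t)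
    (fun b μ => hasDerivAt_slice2 (MFX f) (((hMFX hf).differentiable (by norm_num)) _))

lemma hP2d (t y : ℝ) : HasDerivAt (fun y' => MP2 f t y')
    ((1/2 : ℝ) * ∫ μ in (-1:ℝ)..1, MFXXX f (t, y, μ)) y :=
  swap_avg (fun b μ => MFXX f (t, b, μ)) (fun b μ => MFXXX f (t, b, μ)) y
    (contsl23 (hMFXX hf).continuous t) (contsl23 (hMFXXX hf) t)
    (fun b μ => hasDerivAt_slice2 (MFXX f) (((hMFXX hf).differentiable (by norm_num)) _))

lemma contP1 (t : ℝ) : Continuous (fun y => MP1 f t y) :=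
  continuous_iff_continuousAt.mpr fun y => (hP1d hf t y).continuousAt

lemma contP2 (t : ℝ) : Continuous (fun y => MP2 f t y) :=
  continuous_iff_continuousAt.mpr fun y => (hP2d hf t y).continuousAt

include hσ hσpos

lemma hcurryH :
    (fun t' x' μ' => (1 / σ x') * μ' * px f t' x' μ') = fun a b c => MHU σ f (a, b, c) := by
  funext a b c
  simp only [MHU]
  rw [pxf_eq hf]

include hα hG

lemma opA_eq (t x μ : ℝ) : σ x * opA σ α G f t x μ =
    MHT σ f (t, x, μ) + μ * MKX σ α G f (t, x, μ) := by
  have hH := hMHU hσ hσpos hf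
  have hK := hMKU hσ hσpos hα hG hf
  unfold opA
  rw [hcurryH hσ hσpos hf]
  have h2 : (fun t' x' μ' => (1 / σ x') *
        (pt f t' x' μ' + α x' * f t' x' μ' - G x'
          - μ' * px (fun a b c => MHU σ f (a, b, c)) t' x' μ'))
      = fun a b c => MKU σ α G f (a, b, c) := by
    funext a b c
    simp only [MKU]
    rw [ptf_eq hf, px_curried _ (hH.differentiable (by norm_num))]
    rfl
  rw [h2, pt_curried _ (hH.differentiable (by norm_num)),
    px_curried _ (hK.differentiable (by norm_num))]
  simp only [MHT, MKX]
  have hne : σ x ≠ 0 := (hσpos x).ne'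
  field_simp

lemma opB_eq (t x μ : ℝ) : σ x * opB σ α G f t x μ =
    MGT σ α G f (t, x, μ)
      - μ * px (fun a b c => (1 / σ b) * c *
          px (fun a' b' c' => MGU σ α G f (a', b', c')) a b c) t x μ := by
  set W : ℝ × ℝ × ℝ → ℝ := fun p => MFT f p + α p.2.1 * MFu f p - G p.2.1 with hW
  have hWcd : ContDiff ℝ 1 W :=
    (((hMFT hf).of_le (by norm_num)).add
      ((hα.comp (contDiff_fst.comp contDiff_snd)).mul (hf.of_le (by norm_num)))).sub
      (hG.comp (contDiff_fst.comp contDiff_snd))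
  unfold opB
  have h1 : (fun s y ν => (1 / σ y) * (pt f s y ν + α y * f s y ν - G y))
      = fun a b c => MGU σ α G f (a, b, c) := by
    funext a b c
    simp only [MGU]
    rw [ptf_eq hf]
    rfl
  rw [h1]
  have h2 : (fun t' x' μ' => pt f t' x' μ' + α x' * f t' x' μ' - G x')
      = fun a b c => W (a, b, c) := by
    funext a b c
    simp only [hW]
    rw [ptf_eq hf]
    rfl
  rw [h2, pt_curried _ (hWcd.differentiable (by norm_num))]
  have hMGTval : MGT σ α G f (t, x, μ) = (1 / σ x) * MDT W (t, x, μ) := by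
    have h3 : HasDerivAt (fun s => MGU σ α G f (s, x, μ)) ((1 / σ x) * MDT W (t, x, μ)) t :=
      (hasDerivAt_slice1 W ((hWcd.differentiable (by norm_num)) _)).const_mul (1 / σ x)
    have h4 : HasDerivAt (fun s => MGU σ α G f (s, x, μ)) (MDT (MGU σ α G f) (t, x, μ)) t :=
      hasDerivAt_slice1 (MGU σ α G f)
        (((hMGU hσ hσpos hα hG hf).differentiable (by norm_num)) (t, x, μ))
    exact h4.unique h3
  rw [hMGTval]
  have hne : σ x ≠ 0 := (hσpos x).ne'
  field_simp

end main

section helper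
lemma contμ3 {Φ : ℝ × ℝ × ℝ → ℝ} (h : Continuous Φ) (t x : ℝ) :
    Continuous fun μ => Φ (t, x, μ) :=
  h.comp (continuous_const.prodMk (continuous_const.prodMk continuous_id))

lemma int_add (φ ψ : ℝ → ℝ) (hφ : Continuous φ) (hψ : Continuous ψ) :
    ∫ μ in (-1:ℝ)..1, (φ μ + ψ μ) =
      (∫ μ in (-1:ℝ)..1, φ μ) + ∫ μ in (-1:ℝ)..1, ψ μ :=
  integral_add (hφ.intervalIntegrable _ _) (hψ.intervalIntegrable _ _)

lemma int_sub (φ ψ : ℝ → ℝ) (hφ : Continuous φ) (hψ : Continuous ψ) :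
    ∫ μ in (-1:ℝ)..1, (φ μ - ψ μ) =
      (∫ μ in (-1:ℝ)..1, φ μ) - ∫ μ in (-1:ℝ)..1, ψ μ :=
  integral_sub (hφ.intervalIntegrable _ _) (hψ.intervalIntegrable _ _)

lemma int_id : (∫ μ in (-1:ℝ)..1, μ) = 0 := by
  rw [integral_id]; norm_num

lemma int_sq : (∫ μ in (-1:ℝ)..1, μ ^ 2) = 2/3 := by
  have := integral_pow (a := (-1:ℝ)) (b := 1) 2
  rw [this]; norm_num

lemma uIcc_eq : Set.uIcc (-1:ℝ) 1 = Set.Icc (-1:ℝ) 1 := Set.uIcc_of_le (by norm_num)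
end helper

section macrolemma
variable {f : ℝ → ℝ → ℝ → ℝ} {σ α G : ℝ → ℝ} {ε T xL xR : ℝ}

set_option maxHeartbeats 2000000 in
lemma macro_zero
    (hε : 0 < ε) (hT : 0 < T) (hD : xL < xR)
    (hσ : ContDiff ℝ 2 σ) (hσpos : ∀ x, 0 < σ x)
    (hα : ContDiff ℝ 1 α) (hG : ContDiff ℝ 1 G) (hf : ContDiff ℝ 3 (MFu f))
    (hsol : SolvesLRTE ε T xL xR σ α G f) :
    ∀ t ∈ Set.Ioo (0:ℝ) T, ∀ x ∈ Set.Ioo xL xR,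
      deriv (fun s => avg f s x) t
        - (1 / 3) * deriv (fun y => (1 / σ y) * deriv (fun y' => avg f t y') y) x
        + α x * avg f t x - G x
        - ε * ((1 / 2) * ∫ μ in (-1 : ℝ)..1, σ x * opA σ α G f t x μ)
        - ε ^ 2 * ((1 / 2) * ∫ μ in (-1 : ℝ)..1, σ x * opB σ α G f t x μ) = 0 := by
  intro t ht x hx
  have hεne : ε ≠ 0 := hε.ne'
  have hdiffF : Differentiable ℝ (MFu f) := hf.differentiable (by norm_num)
  have hdiffFX : Differentiable ℝ (MFX f) := (hMFX hf).differentiable (by norm_num)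
  have hdiffFXX : Differentiable ℝ (MFXX f) := (hMFXX hf).differentiable (by norm_num)
  have hdiffH : Differentiable ℝ (MHU σ f) := (hMHU hσ hσpos hf).differentiable (by norm_num)
  have hdiffHX : Differentiable ℝ (MHX σ f) := (hMHX hσ hσpos hf).differentiable (by norm_num)
  have hdiffG : Differentiable ℝ (MGU σ α G f) :=
    (hMGU hσ hσpos hα hG hf).differentiable (by norm_num)
  have hdiffK : Differentiable ℝ (MKU σ α G f) :=
    (hMKU hσ hσpos hα hG hf).differentiable (by norm_num)
  have hdinvd : Differentiable ℝ (fun y => 1 / σ y) :=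
    (hinvσ hσ hσpos).differentiable (by norm_num)
  have hdinv : ∀ b : ℝ, HasDerivAt (fun y => 1 / σ y) (deriv (fun y => 1 / σ y) b) b :=
    fun b => (hdinvd b).hasDerivAt
  have contdinv : Continuous (deriv (fun y => 1 / σ y)) :=
    (hinvσ hσ hσpos).continuous_deriv (by norm_num)
  have continv : Continuous (fun y => 1 / σ y) := (hinvσ hσ hσpos).continuous
  -- bridged equation
  have heq : ∀ s ∈ Set.Ioo (0:ℝ) T, ∀ y ∈ Set.Ioo xL xR, ∀ μ ∈ Set.Icc (-1:ℝ) 1,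
      ε ^ 2 * MFT f (s, y, μ) + ε * μ * MFX f (s, y, μ) =
        σ y * (avg f s y - f s y μ) - ε ^ 2 * α y * f s y μ + ε ^ 2 * G y := by
    intro s hs y hy μ hμ
    have h := hsol s hs y hy μ hμ
    rwa [ptf_eq hf, pxf_eq hf] at h
  have hE : ∀ s ∈ Set.Ioo (0:ℝ) T, ∀ y ∈ Set.Ioo xL xR, ∀ μ ∈ Set.Icc (-1:ℝ) 1,
      avg f s y - f s y μ = ε * (MHU σ f (s, y, μ) + ε * MGU σ α G f (s, y, μ)) := by
    intro s hs y hy μ hμ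
    have h := heq s hs y hy μ hμ
    have hne : σ y ≠ 0 := (hσpos y).ne'
    simp only [MHU, MGU, MFu]
    field_simp
    linear_combination -h

  have hE2 : ∀ s ∈ Set.Ioo (0:ℝ) T, ∀ y ∈ Set.Ioo xL xR, ∀ μ ∈ Set.Icc (-1:ℝ) 1,
      (1 / ε) * (avg f s y - f s y μ) =
        MHU σ f (s, y, μ) + ε * MGU σ α G f (s, y, μ) := by
    intro s hs y hy μ hμ
    have h := hE s hs y hy μ hμ
    field_simp
    linear_combination h
  have hE3 : ∀ s ∈ Set.Ioo (0:ℝ) T, ∀ y ∈ Set.Ioo xL xR, ∀ μ ∈ Set.Icc (-1:ℝ) 1,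
      avg f s y - f s y μ = ε * MHU σ f (s, y, μ) + ε ^ 2 * MGU σ α G f (s, y, μ) := by
    intro s hs y hy μ hμ
    linear_combination hE s hs y hy μ hμ
  -- time-direction swaps at (t, x)
  have hFt_swap : HasDerivAt (fun s => avg f s x)
      ((1/2 : ℝ) * ∫ μ in (-1:ℝ)..1, MFT f (t, x, μ)) t :=
    swap_avg (fun b μ => f b x μ) (fun b μ => MFT f (b, x, μ)) t
      (contsl13 hf.continuous x) (contsl13 (hMFT hf).continuous x)
      (fun b μ => hasDerivAt_slice1 (MFu f) (hdiffF _))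
  have hHt_swap : HasDerivAt (fun s => (1/2 : ℝ) * ∫ μ in (-1:ℝ)..1, MHU σ f (s, x, μ))
      ((1/2 : ℝ) * ∫ μ in (-1:ℝ)..1, MHT σ f (t, x, μ)) t :=
    swap_avg (fun b μ => MHU σ f (b, x, μ)) (fun b μ => MHT σ f (b, x, μ)) t
      (contsl13 (hMHU hσ hσpos hf).continuous x) (contsl13 (hMHT hσ hσpos hf).continuous x)
      (fun b μ => hasDerivAt_slice1 (MHU σ f) (hdiffH _))
  have hGt_swap : HasDerivAt (fun s => (1/2 : ℝ) * ∫ μ in (-1:ℝ)..1, MGU σ α G f (s, x, μ))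
      ((1/2 : ℝ) * ∫ μ in (-1:ℝ)..1, MGT σ α G f (t, x, μ)) t :=
    swap_avg (fun b μ => MGU σ α G f (b, x, μ)) (fun b μ => MGT σ α G f (b, x, μ)) t
      (contsl13 (hMGU hσ hσpos hα hG hf).continuous x)
      (contsl13 (hMGT hσ hσpos hα hG hf) x)
      (fun b μ => hasDerivAt_slice1 (MGU σ α G f) (hdiffG _))
  -- the function ⟨Hu⟩ + ε⟨Gu⟩ vanishes in time on the domain
  have hu0 : ∀ s ∈ Set.Ioo (0:ℝ) T,
      ((1/2 : ℝ) * ∫ μ in (-1:ℝ)..1, MHU σ f (s, x, μ))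
        + ε * ((1/2 : ℝ) * ∫ μ in (-1:ℝ)..1, MGU σ α G f (s, x, μ)) = 0 := by
    intro s hs
    have hcong : Set.EqOn (fun μ => MHU σ f (s, x, μ) + ε * MGU σ α G f (s, x, μ))
        (fun μ => (1/ε) * avg f s x + (-(1/ε)) * f s x μ) (Set.uIcc (-1:ℝ) 1) := by
      intro μ hμ
      rw [uIcc_eq] at hμ
      have h := hE2 s hs x hx μ hμ
      linear_combination -h
    have e3 := intervalIntegral.integral_congr (μ := volume) hcong
    have e1 : (∫ μ in (-1:ℝ)..1, (MHU σ f (s, x, μ) + ε * MGU σ α G f (s, x, μ)))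
        = (∫ μ in (-1:ℝ)..1, MHU σ f (s, x, μ))
          + ∫ μ in (-1:ℝ)..1, ε * MGU σ α G f (s, x, μ) :=
      integral_add ((contμ3 (hMHU hσ hσpos hf).continuous s x).intervalIntegrable _ _)
        ((continuous_const.mul (contμ3 (hMGU hσ hσpos hα hG hf).continuous s x)).intervalIntegrable _ _)
    have e2 : (∫ μ in (-1:ℝ)..1, ε * MGU σ α G f (s, x, μ))
        = ε * ∫ μ in (-1:ℝ)..1, MGU σ α G f (s, x, μ) := integral_const_mul _ _
    have e4 : (∫ μ in (-1:ℝ)..1, ((1/ε) * avg f s x + (-(1/ε)) * f s x μ))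
        = 2 * ((1/ε) * avg f s x) + (-(1/ε)) * ∫ μ in (-1:ℝ)..1, f s x μ := by
      have i1 : IntervalIntegrable (fun _ : ℝ => (1/ε) * avg f s x) volume (-1) 1 :=
        intervalIntegrable_const
      have i2 : IntervalIntegrable (fun μ : ℝ => (-(1/ε)) * f s x μ) volume (-1) 1 :=
        (continuous_const.mul (contμ3 hf.continuous s x)).intervalIntegrable _ _
      rw [integral_add i1 i2, intervalIntegral.integral_const, intervalIntegral.integral_const_mul]
      norm_num
    have e5 : avg f s x = (1/2 : ℝ) * ∫ μ in (-1:ℝ)..1, f s x μ := rfl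
    linear_combination (1/2) * e3 - (1/2) * e1 - (1/2) * e2 + (1/2) * e4 + (1/ε) * e5
  have hstar : ((1/2 : ℝ) * ∫ μ in (-1:ℝ)..1, MHT σ f (t, x, μ))
      + ε * ((1/2 : ℝ) * ∫ μ in (-1:ℝ)..1, MGT σ α G f (t, x, μ)) = 0 := by
    have hcomb := hHt_swap.add (hGt_swap.const_mul ε)
    have hev : (fun s => ((1/2 : ℝ) * ∫ μ in (-1:ℝ)..1, MHU σ f (s, x, μ))
        + ε * ((1/2 : ℝ) * ∫ μ in (-1:ℝ)..1, MGU σ α G f (s, x, μ)))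
          =ᶠ[nhds t] fun _ => (0:ℝ) := by
      filter_upwards [Ioo_mem_nhds ht.1 ht.2] with s hs using hu0 s hs
    have h0 := hcomb.congr_of_eventuallyEq hev.symm
    exact h0.unique (hasDerivAt_const t (0:ℝ))
  -- space-direction swaps at (t, x)
  have hμF_swap : HasDerivAt (fun y => (1/2 : ℝ) * ∫ μ in (-1:ℝ)..1, μ * f t y μ)
      ((1/2 : ℝ) * ∫ μ in (-1:ℝ)..1, μ * MFX f (t, x, μ)) x :=
    swap_avg (fun b μ => μ * f t b μ) (fun b μ => μ * MFX f (t, b, μ)) x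
      (continuous_snd.mul (contsl23 hf.continuous t))
      (continuous_snd.mul (contsl23 (hMFX hf).continuous t))
      (fun b μ => (hasDerivAt_slice2 (MFu f) (hdiffF _)).const_mul μ)
  have hμH_swap : HasDerivAt (fun y => (1/2 : ℝ) * ∫ μ in (-1:ℝ)..1, μ * MHU σ f (t, y, μ))
      ((1/2 : ℝ) * ∫ μ in (-1:ℝ)..1, μ * MHX σ f (t, x, μ)) x :=
    swap_avg (fun b μ => μ * MHU σ f (t, b, μ)) (fun b μ => μ * MHX σ f (t, b, μ)) x
      (continuous_snd.mul (contsl23 (hMHU hσ hσpos hf).continuous t))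
      (continuous_snd.mul (contsl23 (hMHX hσ hσpos hf).continuous t))
      (fun b μ => (hasDerivAt_slice2 (MHU σ f) (hdiffH _)).const_mul μ)
  have hμG_swap : HasDerivAt (fun y => (1/2 : ℝ) * ∫ μ in (-1:ℝ)..1, μ * MGU σ α G f (t, y, μ))
      ((1/2 : ℝ) * ∫ μ in (-1:ℝ)..1, μ * MGX σ α G f (t, x, μ)) x :=
    swap_avg (fun b μ => μ * MGU σ α G f (t, b, μ)) (fun b μ => μ * MGX σ α G f (t, b, μ)) x
      (continuous_snd.mul (contsl23 (hMGU hσ hσpos hα hG hf).continuous t))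
      (continuous_snd.mul (contsl23 (hMGX hσ hσpos hα hG hf) t))
      (fun b μ => (hasDerivAt_slice2 (MGU σ α G f) (hdiffG _)).const_mul μ)
  have hμK_swap : HasDerivAt (fun y => (1/2 : ℝ) * ∫ μ in (-1:ℝ)..1, μ * MKU σ α G f (t, y, μ))
      ((1/2 : ℝ) * ∫ μ in (-1:ℝ)..1, μ * MKX σ α G f (t, x, μ)) x :=
    swap_avg (fun b μ => μ * MKU σ α G f (t, b, μ)) (fun b μ => μ * MKX σ α G f (t, b, μ)) x
      (continuous_snd.mul (contsl23 (hMKU hσ hσpos hα hG hf).continuous t))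
      (continuous_snd.mul (contsl23 (hMKX hσ hσpos hα hG hf) t))
      (fun b μ => (hasDerivAt_slice2 (MKU σ α G f) (hdiffK _)).const_mul μ)
  have hS_swap : HasDerivAt
      (fun y => (1/2 : ℝ) * ∫ μ in (-1:ℝ)..1, (1 / σ y) * (μ ^ 2 * MHX σ f (t, y, μ)))
      ((1/2 : ℝ) * ∫ μ in (-1:ℝ)..1,
        (deriv (fun y => 1 / σ y) x * (μ ^ 2 * MHX σ f (t, x, μ))
          + (1 / σ x) * (μ ^ 2 * MHXX σ f (t, x, μ)))) x :=
    swap_avg (fun b μ => (1 / σ b) * (μ ^ 2 * MHX σ f (t, b, μ)))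
      (fun b μ => (deriv (fun y => 1 / σ y) b * (μ ^ 2 * MHX σ f (t, b, μ))
        + (1 / σ b) * (μ ^ 2 * MHXX σ f (t, b, μ)))) x
      ((continv.comp continuous_fst).mul
        ((continuous_snd.pow 2).mul (contsl23 (hMHX hσ hσpos hf).continuous t)))
      (((contdinv.comp continuous_fst).mul
        ((continuous_snd.pow 2).mul (contsl23 (hMHX hσ hσpos hf).continuous t))).add
        ((continv.comp continuous_fst).mul
          ((continuous_snd.pow 2).mul (contsl23 (hMHXX hσ hσpos hf) t))))
      (fun b μ => (hdinv b).mul ((hasDerivAt_slice2 (MHX σ f) (hdiffHX _)).const_mul (μ ^ 2)))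
  have hD1dAt : ∀ (b μ : ℝ), HasDerivAt (fun y => MD1 ε σ f t y μ) (MD2 ε σ f t b μ) b := by
    intro b μ
    have h1 := ((hP1d hf t b).sub
      (hasDerivAt_slice2 (MFX f) (hdiffFX (t, b, μ)))).const_mul ((1:ℝ)/ε^2)
    have h2 := (hasDerivAt_slice2 (MHX σ f) (hdiffHX (t, b, μ))).const_mul ((1:ℝ)/ε)
    exact h1.sub h2
  have cD1 : Continuous fun p : ℝ × ℝ => MD1 ε σ f t p.1 p.2 := by
    unfold MD1
    exact (continuous_const.mul (((contP1 hf t).comp continuous_fst).sub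
      (contsl23 (hMFX hf).continuous t))).sub
      (continuous_const.mul (contsl23 (hMHX hσ hσpos hf).continuous t))
  have cD2 : Continuous fun p : ℝ × ℝ => MD2 ε σ f t p.1 p.2 := by
    unfold MD2
    exact (continuous_const.mul (((contP2 hf t).comp continuous_fst).sub
      (contsl23 (hMFXX hf).continuous t))).sub
      (continuous_const.mul (contsl23 (hMHXX hσ hσpos hf) t))
  have hL_swap : HasDerivAt
      (fun y => (1/2 : ℝ) * ∫ μ in (-1:ℝ)..1, μ * ((1 / σ y) * (μ * MD1 ε σ f t y μ)))
      ((1/2 : ℝ) * ∫ μ in (-1:ℝ)..1,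
        μ * (deriv (fun y => 1 / σ y) x * (μ * MD1 ε σ f t x μ)
          + (1 / σ x) * (μ * MD2 ε σ f t x μ))) x :=
    swap_avg (fun b μ => μ * ((1 / σ b) * (μ * MD1 ε σ f t b μ)))
      (fun b μ => μ * (deriv (fun y => 1 / σ y) b * (μ * MD1 ε σ f t b μ)
        + (1 / σ b) * (μ * MD2 ε σ f t b μ))) x
      (continuous_snd.mul ((continv.comp continuous_fst).mul (continuous_snd.mul cD1)))
      (continuous_snd.mul (((contdinv.comp continuous_fst).mul
        (continuous_snd.mul cD1)).add
        ((continv.comp continuous_fst).mul (continuous_snd.mul cD2))))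
      (fun b μ => ((hdinv b).mul ((hD1dAt b μ).const_mul μ)).const_mul μ)
  -- first moment of the equation, in space, vanishes on the domain
  have hv0 : ∀ y ∈ Set.Ioo xL xR,
      ((1/2 : ℝ) * ∫ μ in (-1:ℝ)..1, μ * f t y μ)
        + ε * ((1/2 : ℝ) * ∫ μ in (-1:ℝ)..1, μ * MHU σ f (t, y, μ))
        + ε ^ 2 * ((1/2 : ℝ) * ∫ μ in (-1:ℝ)..1, μ * MGU σ α G f (t, y, μ)) = 0 := by
    intro y hy
    have hcong : Set.EqOn
        (fun μ => μ * f t y μ + ε * (μ * MHU σ f (t, y, μ)) + ε ^ 2 * (μ * MGU σ α G f (t, y, μ)))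
        (fun μ => avg f t y * μ) (Set.uIcc (-1:ℝ) 1) := by
      intro μ hμ
      rw [uIcc_eq] at hμ
      have h := hE3 t ht y hy μ hμ
      simp only
      linear_combination -μ * h
    have e3 := intervalIntegral.integral_congr (μ := volume) hcong
    have e1 : (∫ μ in (-1:ℝ)..1,
          (μ * f t y μ + ε * (μ * MHU σ f (t, y, μ)) + ε ^ 2 * (μ * MGU σ α G f (t, y, μ))))
        = ((∫ μ in (-1:ℝ)..1, μ * f t y μ)
            + ∫ μ in (-1:ℝ)..1, ε * (μ * MHU σ f (t, y, μ)))
          + ∫ μ in (-1:ℝ)..1, ε ^ 2 * (μ * MGU σ α G f (t, y, μ)) := by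
      have i1 : IntervalIntegrable (fun μ : ℝ => μ * f t y μ) volume (-1) 1 :=
        (continuous_id.mul (contμ3 hf.continuous t y)).intervalIntegrable _ _
      have i2 : IntervalIntegrable (fun μ : ℝ => ε * (μ * MHU σ f (t, y, μ))) volume (-1) 1 :=
        (continuous_const.mul (continuous_id.mul
          (contμ3 (hMHU hσ hσpos hf).continuous t y))).intervalIntegrable _ _
      have i3 : IntervalIntegrable (fun μ : ℝ => ε ^ 2 * (μ * MGU σ α G f (t, y, μ))) volume (-1) 1 :=
        (continuous_const.mul (continuous_id.mul
          (contμ3 (hMGU hσ hσpos hα hG hf).continuous t y))).intervalIntegrable _ _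
      rw [integral_add (i1.add i2) i3, integral_add i1 i2]
    have e6 : (∫ μ in (-1:ℝ)..1, ε * (μ * MHU σ f (t, y, μ)))
        = ε * ∫ μ in (-1:ℝ)..1, μ * MHU σ f (t, y, μ) := integral_const_mul _ _
    have e7 : (∫ μ in (-1:ℝ)..1, ε ^ 2 * (μ * MGU σ α G f (t, y, μ)))
        = ε ^ 2 * ∫ μ in (-1:ℝ)..1, μ * MGU σ α G f (t, y, μ) := integral_const_mul _ _
    have e4 : (∫ μ in (-1:ℝ)..1, avg f t y * μ) = 0 := by
      rw [intervalIntegral.integral_const_mul, int_id]; ring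
    linear_combination (1/2) * e3 - (1/2) * e1 - (1/2) * e6 - (1/2) * e7 + (1/2) * e4
  have hAEx : ((1/2 : ℝ) * ∫ μ in (-1:ℝ)..1, μ * MFX f (t, x, μ))
      + ε * ((1/2 : ℝ) * ∫ μ in (-1:ℝ)..1, μ * MHX σ f (t, x, μ))
      + ε ^ 2 * ((1/2 : ℝ) * ∫ μ in (-1:ℝ)..1, μ * MGX σ α G f (t, x, μ)) = 0 := by
    have hcomb := (hμF_swap.add (hμH_swap.const_mul ε)).add (hμG_swap.const_mul (ε ^ 2))
    have hev : (fun y => ((1/2 : ℝ) * ∫ μ in (-1:ℝ)..1, μ * f t y μ)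
        + ε * ((1/2 : ℝ) * ∫ μ in (-1:ℝ)..1, μ * MHU σ f (t, y, μ))
        + ε ^ 2 * ((1/2 : ℝ) * ∫ μ in (-1:ℝ)..1, μ * MGU σ α G f (t, y, μ)))
          =ᶠ[nhds x] fun _ => (0:ℝ) := by
      filter_upwards [Ioo_mem_nhds hx.1 hx.2] with y hy using hv0 y hy
    have h0 := hcomb.congr_of_eventuallyEq hev.symm
    exact h0.unique (hasDerivAt_const x (0:ℝ))
  -- averaged equation at (t, x)
  have hAE : ε ^ 2 * ((1/2 : ℝ) * ∫ μ in (-1:ℝ)..1, MFT f (t, x, μ))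
      + ε * ((1/2 : ℝ) * ∫ μ in (-1:ℝ)..1, μ * MFX f (t, x, μ))
      + ε ^ 2 * α x * avg f t x - ε ^ 2 * G x = 0 := by
    have hcong : Set.EqOn (fun μ => ε ^ 2 * MFT f (t, x, μ) + ε * (μ * MFX f (t, x, μ)))
        (fun μ => (σ x * avg f t x + ε ^ 2 * G x) + (-(σ x) - ε ^ 2 * α x) * f t x μ)
        (Set.uIcc (-1:ℝ) 1) := by
      intro μ hμ
      rw [uIcc_eq] at hμ
      have h := heq t ht x hx μ hμ
      simp only
      linear_combination h
    have e3 := intervalIntegral.integral_congr (μ := volume) hcong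
    have e1 : (∫ μ in (-1:ℝ)..1, (ε ^ 2 * MFT f (t, x, μ) + ε * (μ * MFX f (t, x, μ))))
        = (∫ μ in (-1:ℝ)..1, ε ^ 2 * MFT f (t, x, μ))
          + ∫ μ in (-1:ℝ)..1, ε * (μ * MFX f (t, x, μ)) :=
      integral_add ((continuous_const.mul (contμ3 (hMFT hf).continuous t x)).intervalIntegrable _ _)
        ((continuous_const.mul (continuous_id.mul
          (contμ3 (hMFX hf).continuous t x))).intervalIntegrable _ _)
    have e6 : (∫ μ in (-1:ℝ)..1, ε ^ 2 * MFT f (t, x, μ))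
        = ε ^ 2 * ∫ μ in (-1:ℝ)..1, MFT f (t, x, μ) := integral_const_mul _ _
    have e7 : (∫ μ in (-1:ℝ)..1, ε * (μ * MFX f (t, x, μ)))
        = ε * ∫ μ in (-1:ℝ)..1, μ * MFX f (t, x, μ) := integral_const_mul _ _
    have e4 : (∫ μ in (-1:ℝ)..1,
          ((σ x * avg f t x + ε ^ 2 * G x) + (-(σ x) - ε ^ 2 * α x) * f t x μ))
        = 2 * (σ x * avg f t x + ε ^ 2 * G x)
          + (-(σ x) - ε ^ 2 * α x) * ∫ μ in (-1:ℝ)..1, f t x μ := by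
      have i1 : IntervalIntegrable (fun _ : ℝ => σ x * avg f t x + ε ^ 2 * G x) volume (-1) 1 :=
        intervalIntegrable_const
      have i2 : IntervalIntegrable (fun μ : ℝ => (-(σ x) - ε ^ 2 * α x) * f t x μ) volume (-1) 1 :=
        (continuous_const.mul (contμ3 hf.continuous t x)).intervalIntegrable _ _
      rw [integral_add i1 i2, intervalIntegral.integral_const, intervalIntegral.integral_const_mul]
      norm_num
    have e5 : avg f t x = (1/2 : ℝ) * ∫ μ in (-1:ℝ)..1, f t x μ := rfl
    linear_combination (1/2) * e3 - (1/2) * e1 - (1/2) * e6 - (1/2) * e7 + (1/2) * e4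
      + (σ x + ε ^ 2 * α x) * e5

  -- the z-function is identically zero
  have hzy : (fun y => ((1/2 : ℝ) * ∫ μ in (-1:ℝ)..1, μ * MHU σ f (t, y, μ))
      + ε * ((1/2 : ℝ) * ∫ μ in (-1:ℝ)..1, (1 / σ y) * (μ ^ 2 * MHX σ f (t, y, μ)))
      + ε ^ 2 * ((1/2 : ℝ) * ∫ μ in (-1:ℝ)..1, μ * ((1 / σ y) * (μ * MD1 ε σ f t y μ))))
      = fun y => (1/3 : ℝ) * ((1 / σ y) * MP1 f t y) := by
    funext y
    have hne : σ y ≠ 0 := (hσpos y).ne'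
    have hcong : Set.EqOn
        (fun μ => μ * MHU σ f (t, y, μ) + ε * ((1 / σ y) * (μ ^ 2 * MHX σ f (t, y, μ)))
          + ε ^ 2 * (μ * ((1 / σ y) * (μ * MD1 ε σ f t y μ))))
        (fun μ => ((1 / σ y) * MP1 f t y) * μ ^ 2) (Set.uIcc (-1:ℝ) 1) := by
      intro μ hμ
      simp only [MHU, MD1]
      field_simp
      ring
    have e3 := intervalIntegral.integral_congr (μ := volume) hcong
    have cD1y : Continuous fun μ : ℝ => MD1 ε σ f t y μ := cD1.comp (Continuous.prodMk_right y)
    have i1 : IntervalIntegrable (fun μ : ℝ => μ * MHU σ f (t, y, μ)) volume (-1) 1 :=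
      (continuous_id.mul (contμ3 (hMHU hσ hσpos hf).continuous t y)).intervalIntegrable _ _
    have i2 : IntervalIntegrable
        (fun μ : ℝ => ε * ((1 / σ y) * (μ ^ 2 * MHX σ f (t, y, μ)))) volume (-1) 1 :=
      (continuous_const.mul (continuous_const.mul ((continuous_pow 2).mul
        (contμ3 (hMHX hσ hσpos hf).continuous t y)))).intervalIntegrable _ _
    have i3 : IntervalIntegrable
        (fun μ : ℝ => ε ^ 2 * (μ * ((1 / σ y) * (μ * MD1 ε σ f t y μ)))) volume (-1) 1 :=
      (continuous_const.mul (continuous_id.mul (continuous_const.mul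
        (continuous_id.mul cD1y)))).intervalIntegrable _ _
    have e1 := integral_add (i1.add i2) i3
    have e1b := integral_add i1 i2
    have e6 : (∫ μ in (-1:ℝ)..1, ε * ((1 / σ y) * (μ ^ 2 * MHX σ f (t, y, μ))))
        = ε * ∫ μ in (-1:ℝ)..1, (1 / σ y) * (μ ^ 2 * MHX σ f (t, y, μ)) := integral_const_mul _ _
    have e7 : (∫ μ in (-1:ℝ)..1, ε ^ 2 * (μ * ((1 / σ y) * (μ * MD1 ε σ f t y μ))))
        = ε ^ 2 * ∫ μ in (-1:ℝ)..1, μ * ((1 / σ y) * (μ * MD1 ε σ f t y μ)) :=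
      integral_const_mul _ _
    have e4 : (∫ μ in (-1:ℝ)..1, ((1 / σ y) * MP1 f t y) * μ ^ 2)
        = ((1 / σ y) * MP1 f t y) * (2/3) := by
      rw [intervalIntegral.integral_const_mul, int_sq]
    linear_combination (1/2) * e3 - (1/2) * e1 - (1/2) * e1b - (1/2) * e6 - (1/2) * e7
      + (1/2) * e4
  have hZcomb : HasDerivAt (fun y => ((1/2 : ℝ) * ∫ μ in (-1:ℝ)..1, μ * MHU σ f (t, y, μ))
      + ε * ((1/2 : ℝ) * ∫ μ in (-1:ℝ)..1, (1 / σ y) * (μ ^ 2 * MHX σ f (t, y, μ)))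
      + ε ^ 2 * ((1/2 : ℝ) * ∫ μ in (-1:ℝ)..1, μ * ((1 / σ y) * (μ * MD1 ε σ f t y μ))))
      ((((1/2 : ℝ) * ∫ μ in (-1:ℝ)..1, μ * MHX σ f (t, x, μ))
        + ε * ((1/2 : ℝ) * ∫ μ in (-1:ℝ)..1,
          (deriv (fun y => 1 / σ y) x * (μ ^ 2 * MHX σ f (t, x, μ))
            + (1 / σ x) * (μ ^ 2 * MHXX σ f (t, x, μ)))))
        + ε ^ 2 * ((1/2 : ℝ) * ∫ μ in (-1:ℝ)..1,
          μ * (deriv (fun y => 1 / σ y) x * (μ * MD1 ε σ f t x μ)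
            + (1 / σ x) * (μ * MD2 ε σ f t x μ)))) x :=
    (hμH_swap.add (hS_swap.const_mul ε)).add (hL_swap.const_mul (ε ^ 2))
  have hZk := hZcomb.congr_of_eventuallyEq
    (Filter.Eventually.of_forall fun y => (congrFun hzy y).symm)
  have hZrhs : HasDerivAt (fun y => (1/3 : ℝ) * ((1 / σ y) * MP1 f t y))
      ((1/3 : ℝ) * (deriv (fun y => 1 / σ y) x * MP1 f t x + (1 / σ x) * MP2 f t x)) x :=
    ((hdinv x).mul (hP1d hf t x)).const_mul (1/3 : ℝ)
  have hZ := hZk.unique hZrhs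
  -- the opA average
  have hopAval : ((1 / 2 : ℝ) * ∫ μ in (-1:ℝ)..1, σ x * opA σ α G f t x μ)
      = ((1/2 : ℝ) * ∫ μ in (-1:ℝ)..1, MHT σ f (t, x, μ))
        + ((1/2 : ℝ) * ∫ μ in (-1:ℝ)..1, μ * MKX σ α G f (t, x, μ)) := by
    have hfe : (fun μ => σ x * opA σ α G f t x μ)
        = fun μ => MHT σ f (t, x, μ) + μ * MKX σ α G f (t, x, μ) :=
      funext fun μ => opA_eq hσ hσpos hα hG hf t x μ
    rw [hfe]
    have i1 : IntervalIntegrable (fun μ : ℝ => MHT σ f (t, x, μ)) volume (-1) 1 :=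
      (contμ3 (hMHT hσ hσpos hf).continuous t x).intervalIntegrable _ _
    have i2 : IntervalIntegrable (fun μ : ℝ => μ * MKX σ α G f (t, x, μ)) volume (-1) 1 :=
      (continuous_id.mul (contμ3 (hMKX hσ hσpos hα hG hf) t x)).intervalIntegrable _ _
    rw [integral_add i1 i2]
    ring
  have hKsplit : (fun y => (1/2 : ℝ) * ∫ μ in (-1:ℝ)..1, μ * MKU σ α G f (t, y, μ))
      = fun y => ((1/2 : ℝ) * ∫ μ in (-1:ℝ)..1, μ * MGU σ α G f (t, y, μ))
        - ((1/2 : ℝ) * ∫ μ in (-1:ℝ)..1, (1 / σ y) * (μ ^ 2 * MHX σ f (t, y, μ))) := by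
    funext y
    have hcong2 : (fun μ : ℝ => μ * MKU σ α G f (t, y, μ))
        = fun μ => μ * MGU σ α G f (t, y, μ) - (1 / σ y) * (μ ^ 2 * MHX σ f (t, y, μ)) := by
      funext μ
      simp only [MKU, MGU]
      ring
    have i1 : IntervalIntegrable (fun μ : ℝ => μ * MGU σ α G f (t, y, μ)) volume (-1) 1 :=
      (continuous_id.mul (contμ3 (hMGU hσ hσpos hα hG hf).continuous t y)).intervalIntegrable _ _
    have i2 : IntervalIntegrable
        (fun μ : ℝ => (1 / σ y) * (μ ^ 2 * MHX σ f (t, y, μ))) volume (-1) 1 :=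
      (continuous_const.mul ((continuous_pow 2).mul
        (contμ3 (hMHX hσ hσpos hf).continuous t y))).intervalIntegrable _ _
    rw [hcong2, integral_sub i1 i2]
    ring
  have hKder : HasDerivAt (fun y => (1/2 : ℝ) * ∫ μ in (-1:ℝ)..1, μ * MKU σ α G f (t, y, μ))
      (((1/2 : ℝ) * ∫ μ in (-1:ℝ)..1, μ * MGX σ α G f (t, x, μ))
        - ((1/2 : ℝ) * ∫ μ in (-1:ℝ)..1,
          (deriv (fun y => 1 / σ y) x * (μ ^ 2 * MHX σ f (t, x, μ))
            + (1 / σ x) * (μ ^ 2 * MHXX σ f (t, x, μ))))) x := by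
    rw [hKsplit]
    exact hμG_swap.sub hS_swap
  have hKval := hμK_swap.unique hKder
  -- the opB average
  have hopBval : ((1 / 2 : ℝ) * ∫ μ in (-1:ℝ)..1, σ x * opB σ α G f t x μ)
      = ((1/2 : ℝ) * ∫ μ in (-1:ℝ)..1, MGT σ α G f (t, x, μ))
        - ((1/2 : ℝ) * ∫ μ in (-1:ℝ)..1,
          μ * (deriv (fun y => 1 / σ y) x * (μ * MD1 ε σ f t x μ)
            + (1 / σ x) * (μ * MD2 ε σ f t x μ))) := by
    have hcong : Set.EqOn (fun μ => σ x * opB σ α G f t x μ)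
        (fun μ => MGT σ α G f (t, x, μ)
          - μ * (deriv (fun y => 1 / σ y) x * (μ * MD1 ε σ f t x μ)
            + (1 / σ x) * (μ * MD2 ε σ f t x μ))) (Set.uIcc (-1:ℝ) 1) := by
      intro μ hμ
      rw [uIcc_eq] at hμ
      have h0 := opB_eq hσ hσpos hα hG hf t x μ
      beta_reduce
      rw [h0]
      have hinner : ∀ y ∈ Set.Ioo xL xR,
          px (fun a' b' c' => MGU σ α G f (a', b', c')) t y μ = MD1 ε σ f t y μ := by
        intro y hy
        have hev : (fun y' => MGU σ α G f (t, y', μ)) =ᶠ[nhds y]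
            (fun y' => (1/ε^2) * (avg f t y' - f t y' μ) - (1/ε) * MHU σ f (t, y', μ)) := by
          filter_upwards [Ioo_mem_nhds hy.1 hy.2] with y' hy'
          have h := hE3 t ht y' hy' μ hμ
          field_simp
          linear_combination -h
        have hder : HasDerivAt
            (fun y' => (1/ε^2) * (avg f t y' - f t y' μ) - (1/ε) * MHU σ f (t, y', μ))
            (MD1 ε σ f t y μ) y := by
          have h1 := ((hP1deriv hf t y).sub
            (hasDerivAt_slice2 (MFu f) (hdiffF (t, y, μ)))).const_mul ((1:ℝ)/ε^2)
          have h2 := (hasDerivAt_slice2 (MHU σ f) (hdiffH (t, y, μ))).const_mul ((1:ℝ)/ε)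
          exact h1.sub h2
        have hrfl : px (fun a' b' c' => MGU σ α G f (a', b', c')) t y μ
            = deriv (fun y' => MGU σ α G f (t, y', μ)) y := rfl
        rw [hrfl, hev.deriv_eq, hder.deriv]
      have hev2 : (fun y => (1 / σ y) * μ *
          px (fun a' b' c' => MGU σ α G f (a', b', c')) t y μ) =ᶠ[nhds x]
            (fun y => (1 / σ y) * (μ * MD1 ε σ f t y μ)) := by
        filter_upwards [Ioo_mem_nhds hx.1 hx.2] with y hy
        rw [hinner y hy]
        ring
      have hder3 : HasDerivAt (fun y => (1 / σ y) * (μ * MD1 ε σ f t y μ))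
          (deriv (fun y => 1 / σ y) x * (μ * MD1 ε σ f t x μ)
            + (1 / σ x) * (μ * MD2 ε σ f t x μ)) x :=
        (hdinv x).mul ((hD1dAt x μ).const_mul μ)
      have hpx : px (fun a b c => (1 / σ b) * c *
          px (fun a' b' c' => MGU σ α G f (a', b', c')) a b c) t x μ
            = deriv (fun y => 1 / σ y) x * (μ * MD1 ε σ f t x μ)
              + (1 / σ x) * (μ * MD2 ε σ f t x μ) := by
        have h4 : px (fun a b c => (1 / σ b) * c *
            px (fun a' b' c' => MGU σ α G f (a', b', c')) a b c) t x μ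
              = deriv (fun y => (1 / σ y) * μ *
                px (fun a' b' c' => MGU σ α G f (a', b', c')) t y μ) x := rfl
        rw [h4, hev2.deriv_eq, hder3.deriv]
      rw [hpx]
    have e3 := intervalIntegral.integral_congr (μ := volume) hcong
    have cD1x : Continuous fun μ : ℝ => MD1 ε σ f t x μ := cD1.comp (Continuous.prodMk_right x)
    have cD2x : Continuous fun μ : ℝ => MD2 ε σ f t x μ := cD2.comp (Continuous.prodMk_right x)
    have i1 : IntervalIntegrable (fun μ : ℝ => MGT σ α G f (t, x, μ)) volume (-1) 1 :=
      (contμ3 (hMGT hσ hσpos hα hG hf) t x).intervalIntegrable _ _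
    have i2 : IntervalIntegrable (fun μ : ℝ =>
        μ * (deriv (fun y => 1 / σ y) x * (μ * MD1 ε σ f t x μ)
          + (1 / σ x) * (μ * MD2 ε σ f t x μ))) volume (-1) 1 :=
      (continuous_id.mul ((continuous_const.mul (continuous_id.mul cD1x)).add
        (continuous_const.mul (continuous_id.mul cD2x)))).intervalIntegrable _ _
    have e1 := integral_sub i1 i2
    linear_combination (1/2) * e3 + (1/2) * e1
  -- final assembly
  have hT1 : deriv (fun s => avg f s x) t
      = (1/2 : ℝ) * ∫ μ in (-1:ℝ)..1, MFT f (t, x, μ) := hFt_swap.deriv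
  have hinner_eq : (fun y => (1 / σ y) * deriv (fun y' => avg f t y') y)
      = fun y => (1 / σ y) * MP1 f t y :=
    funext fun y => by rw [(hP1deriv hf t y).deriv]
  have hT2 : deriv (fun y => (1 / σ y) * deriv (fun y' => avg f t y') y) x
      = deriv (fun y => 1 / σ y) x * MP1 f t x + (1 / σ x) * MP2 f t x := by
    rw [hinner_eq]
    exact ((hdinv x).mul (hP1d hf t x)).deriv
  have hcombAE : ((1/2 : ℝ) * ∫ μ in (-1:ℝ)..1, MFT f (t, x, μ)) + α x * avg f t x - G x
      = ((1/2 : ℝ) * ∫ μ in (-1:ℝ)..1, μ * MHX σ f (t, x, μ))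
        + ε * ((1/2 : ℝ) * ∫ μ in (-1:ℝ)..1, μ * MGX σ α G f (t, x, μ)) := by
    have h2 : ε ^ 2 * (((((1/2 : ℝ) * ∫ μ in (-1:ℝ)..1, MFT f (t, x, μ))
        + α x * avg f t x - G x)
        - (((1/2 : ℝ) * ∫ μ in (-1:ℝ)..1, μ * MHX σ f (t, x, μ))
          + ε * ((1/2 : ℝ) * ∫ μ in (-1:ℝ)..1, μ * MGX σ α G f (t, x, μ))))) = 0 := by
      linear_combination hAE - ε * hAEx
    have h3 := (mul_eq_zero.mp h2).resolve_left (pow_ne_zero 2 hεne)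
    linarith
  rw [hT1, hT2, hopAval, hKval, hopBval]
  linear_combination hZ - ε * hstar + hcombAE


end macrolemma

lemma ae_ne_point (c : ℝ) : ∀ᵐ s : ℝ, s ≠ c := by
  have h : (volume : Measure ℝ) {c} = 0 := measure_singleton c
  rw [MeasureTheory.ae_iff]
  simpa only [ne_eq, not_not, Set.setOf_eq_eq_singleton] using h

/-- Consistency of the MA-APNN governing loss: if `f` is three times continuously
differentiable and satisfies the scaled 1D LRTE on `τ × D × [-1,1]`, then for any
measurable weight `λ : D → ℝ` the MA-APNN governing loss evaluated at `f` vanishes. -/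
theorem MAAPNN_loss_consistency
    (ε T xL xR : ℝ) (σ α G : ℝ → ℝ) (f : ℝ → ℝ → ℝ → ℝ) (lam : ℝ → ℝ)
    (hε : 0 < ε) (hT : 0 < T) (hD : xL < xR)
    (hσ : ContDiff ℝ 2 σ) (hσpos : ∀ x, 0 < σ x)
    (hα : ContDiff ℝ 1 α) (hG : ContDiff ℝ 1 G)
    (hf : ContDiff ℝ 3 (fun p : ℝ × ℝ × ℝ => f p.1 p.2.1 p.2.2))
    (hsol : SolvesLRTE ε T xL xR σ α G f)
    (hlam : Measurable lam) :
    (∫ t in (0 : ℝ)..T, ∫ x in xL..xR, ∫ μ in (-1 : ℝ)..1,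
        lam x *
          |ε ^ 2 * pt f t x μ + ε * μ * px f t x μ - σ x * (avg f t x - f t x μ)
            + ε ^ 2 * α x * f t x μ - ε ^ 2 * G x| ^ 2)
      + (∫ t in (0 : ℝ)..T, ∫ x in xL..xR,
          (1 - lam x) *
            |deriv (fun s => avg f s x) t
              - (1 / 3) * deriv (fun y => (1 / σ y) * deriv (fun y' => avg f t y') y) x
              + α x * avg f t x - G x
              - ε * ((1 / 2) * ∫ μ in (-1 : ℝ)..1, σ x * opA σ α G f t x μ)
              - ε ^ 2 * ((1 / 2) * ∫ μ in (-1 : ℝ)..1, σ x * opB σ α G f t x μ)| ^ 2)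
      = 0 := by
  have hfu : ContDiff ℝ 3 (MFu f) := hf
  have key2 := macro_zero hε hT hD hσ hσpos hα hG hfu hsol
  have hIoc_t : ∀ᵐ s : ℝ, s ∈ Set.uIoc (0:ℝ) T → s ∈ Set.Ioo (0:ℝ) T := by
    filter_upwards [ae_ne_point T] with s hsne hmem
    rw [Set.uIoc_of_le hT.le] at hmem
    exact ⟨hmem.1, lt_of_le_of_ne hmem.2 hsne⟩
  have hIoc_x : ∀ᵐ y : ℝ, y ∈ Set.uIoc xL xR → y ∈ Set.Ioo xL xR := by
    filter_upwards [ae_ne_point xR] with y hyne hmem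
    rw [Set.uIoc_of_le hD.le] at hmem
    exact ⟨hmem.1, lt_of_le_of_ne hmem.2 hyne⟩
  have hI1 : (∫ t in (0 : ℝ)..T, ∫ x in xL..xR, ∫ μ in (-1 : ℝ)..1,
      lam x * |ε ^ 2 * pt f t x μ + ε * μ * px f t x μ - σ x * (avg f t x - f t x μ)
        + ε ^ 2 * α x * f t x μ - ε ^ 2 * G x| ^ 2) = 0 := by
    have h1 : ∀ᵐ t : ℝ, t ∈ Set.uIoc (0:ℝ) T →
        (∫ x in xL..xR, ∫ μ in (-1 : ℝ)..1,
          lam x * |ε ^ 2 * pt f t x μ + ε * μ * px f t x μ - σ x * (avg f t x - f t x μ)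
            + ε ^ 2 * α x * f t x μ - ε ^ 2 * G x| ^ 2) = (0:ℝ) := by
      filter_upwards [hIoc_t] with t hmem hmem'
      have ht := hmem hmem'
      have h2 : ∀ᵐ y : ℝ, y ∈ Set.uIoc xL xR →
          (∫ μ in (-1 : ℝ)..1,
            lam y * |ε ^ 2 * pt f t y μ + ε * μ * px f t y μ - σ y * (avg f t y - f t y μ)
              + ε ^ 2 * α y * f t y μ - ε ^ 2 * G y| ^ 2) = (0:ℝ) := by
        filter_upwards [hIoc_x] with y hmem2 hmem2'
        have hy := hmem2 hmem2'
        have hcong : Set.EqOn (fun μ =>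
            lam y * |ε ^ 2 * pt f t y μ + ε * μ * px f t y μ - σ y * (avg f t y - f t y μ)
              + ε ^ 2 * α y * f t y μ - ε ^ 2 * G y| ^ 2) (fun _ => (0:ℝ))
            (Set.uIcc (-1:ℝ) 1) := by
          intro μ hμ
          rw [uIcc_eq] at hμ
          have h := hsol t ht y hy μ hμ
          have hzero : ε ^ 2 * pt f t y μ + ε * μ * px f t y μ - σ y * (avg f t y - f t y μ)
              + ε ^ 2 * α y * f t y μ - ε ^ 2 * G y = 0 := by linarith [h]
          simp only
          rw [hzero]
          simp
        rw [intervalIntegral.integral_congr (μ := volume) hcong]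
        simp
      calc (∫ y in xL..xR, ∫ μ in (-1 : ℝ)..1,
            lam y * |ε ^ 2 * pt f t y μ + ε * μ * px f t y μ - σ y * (avg f t y - f t y μ)
              + ε ^ 2 * α y * f t y μ - ε ^ 2 * G y| ^ 2)
          = ∫ _ in xL..xR, (0:ℝ) := intervalIntegral.integral_congr_ae h2
        _ = 0 := by simp
    calc (∫ t in (0 : ℝ)..T, ∫ x in xL..xR, ∫ μ in (-1 : ℝ)..1,
          lam x * |ε ^ 2 * pt f t x μ + ε * μ * px f t x μ - σ x * (avg f t x - f t x μ)
            + ε ^ 2 * α x * f t x μ - ε ^ 2 * G x| ^ 2)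
        = ∫ _ in (0:ℝ)..T, (0:ℝ) := intervalIntegral.integral_congr_ae h1
      _ = 0 := by simp
  have hI2 : (∫ t in (0 : ℝ)..T, ∫ x in xL..xR,
      (1 - lam x) *
        |deriv (fun s => avg f s x) t
          - (1 / 3) * deriv (fun y => (1 / σ y) * deriv (fun y' => avg f t y') y) x
          + α x * avg f t x - G x
          - ε * ((1 / 2) * ∫ μ in (-1 : ℝ)..1, σ x * opA σ α G f t x μ)
          - ε ^ 2 * ((1 / 2) * ∫ μ in (-1 : ℝ)..1, σ x * opB σ α G f t x μ)| ^ 2) = 0 := by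
    have h1 : ∀ᵐ t : ℝ, t ∈ Set.uIoc (0:ℝ) T →
        (∫ x in xL..xR,
          (1 - lam x) *
            |deriv (fun s => avg f s x) t
              - (1 / 3) * deriv (fun y => (1 / σ y) * deriv (fun y' => avg f t y') y) x
              + α x * avg f t x - G x
              - ε * ((1 / 2) * ∫ μ in (-1 : ℝ)..1, σ x * opA σ α G f t x μ)
              - ε ^ 2 * ((1 / 2) * ∫ μ in (-1 : ℝ)..1, σ x * opB σ α G f t x μ)| ^ 2) = (0:ℝ) := by
      filter_upwards [hIoc_t] with t hmem hmem'
      have ht := hmem hmem'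
      have h2 : ∀ᵐ y : ℝ, y ∈ Set.uIoc xL xR →
          ((1 - lam y) *
            |deriv (fun s => avg f s y) t
              - (1 / 3) * deriv (fun x' => (1 / σ x') * deriv (fun y' => avg f t y') x') y
              + α y * avg f t y - G y
              - ε * ((1 / 2) * ∫ μ in (-1 : ℝ)..1, σ y * opA σ α G f t y μ)
              - ε ^ 2 * ((1 / 2) * ∫ μ in (-1 : ℝ)..1, σ y * opB σ α G f t y μ)| ^ 2) = (0:ℝ) := by
        filter_upwards [hIoc_x] with y hmem2 hmem2'
        have hy := hmem2 hmem2'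
        have hzero := key2 t ht y hy
        rw [hzero]
        simp
      calc (∫ y in xL..xR,
            (1 - lam y) *
              |deriv (fun s => avg f s y) t
                - (1 / 3) * deriv (fun x' => (1 / σ x') * deriv (fun y' => avg f t y') x') y
                + α y * avg f t y - G y
                - ε * ((1 / 2) * ∫ μ in (-1 : ℝ)..1, σ y * opA σ α G f t y μ)
                - ε ^ 2 * ((1 / 2) * ∫ μ in (-1 : ℝ)..1, σ y * opB σ α G f t y μ)| ^ 2)
          = ∫ _ in xL..xR, (0:ℝ) := intervalIntegral.integral_congr_ae h2
        _ = 0 := by simp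
    calc (∫ t in (0 : ℝ)..T, ∫ x in xL..xR,
          (1 - lam x) *
            |deriv (fun s => avg f s x) t
              - (1 / 3) * deriv (fun y => (1 / σ y) * deriv (fun y' => avg f t y') y) x
              + α x * avg f t x - G x
              - ε * ((1 / 2) * ∫ μ in (-1 : ℝ)..1, σ x * opA σ α G f t x μ)
              - ε ^ 2 * ((1 / 2) * ∫ μ in (-1 : ℝ)..1, σ x * opB σ α G f t x μ)| ^ 2)
        = ∫ _ in (0:ℝ)..T, (0:ℝ) := intervalIntegral.integral_congr_ae h1
      _ = 0 := by simp
  rw [hI1, hI2]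
  norm_num
end
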